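/- arXiv:2502.04730 — 3 statements merged into one kernel-verified Lean document; each statement's English description precedes it below -/
import Mathlib

section
/- Attaching a new leaf to an edge of an unrooted bifurcating tree with n leaves (by subdividing the chosen edge with a new internal node and joining the new leaf to it) yields an unrooted bifurcating tree with n+1 leaves, and distinct choices of edge yield non-isomorphic results as leaf-labeled trees. -/
open SimpleGraph

/-- A (graph, leaf-embedding) pair is an unrooted bifurcating phylogenetic tree topology. -/
structure IsPhylo {V : Type} {N : ℕ} (G : SimpleGraph V) (leaf : Fin N ↪ V) : Prop where
  finite : Finite V
  isTree : G.IsTree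
  deg : ∀ v : V, (G.neighborSet v).ncard = 1 ∨ (G.neighborSet v).ncard = 3
  leafIff : ∀ v : V, (G.neighborSet v).ncard = 1 ↔ ∃ i, leaf i = v

/-- Leaf-label-preserving graph isomorphism between two leaf-labeled graphs. -/
def LabeledIso {V W : Type} {N : ℕ} (G : SimpleGraph V) (leaf : Fin N ↪ V)
    (H : SimpleGraph W) (leaf' : Fin N ↪ W) : Prop :=
  ∃ φ : V ≃ W, (∀ a b : V, G.Adj a b ↔ H.Adj (φ a) (φ b)) ∧ ∀ i : Fin N, φ (leaf i) = leaf' i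

/-- Attach a new leaf to the edge `e` of `G`: remove `e = (u,v)`, add a new internal node
`w = Sum.inr false` with edges `(u,w)`, `(w,v)`, and join the new leaf `x = Sum.inr true`
to `w`. -/
def attachGraph {V : Type} (G : SimpleGraph V) (e : Sym2 V) : SimpleGraph (V ⊕ Bool) :=
  SimpleGraph.fromRel (fun a b =>
    match a, b with
    | Sum.inl a, Sum.inl b => G.Adj a b ∧ s(a, b) ≠ e
    | Sum.inl a, Sum.inr false => a ∈ e
    | Sum.inr false, Sum.inr true => True
    | _, _ => False)

/-- Extend a leaf labeling by the fresh leaf `Sum.inr true`. -/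
def attachLeaf {V : Type} {n : ℕ} (leaf : Fin n ↪ V) : Fin (n + 1) ↪ (V ⊕ Bool) where
  toFun := Fin.lastCases (Sum.inr true) (fun i => Sum.inl (leaf i))
  inj' := by
    intro i j hij
    induction i using Fin.lastCases with
    | last =>
      induction j using Fin.lastCases with
      | last => rfl
      | cast j => simp [Fin.lastCases_last, Fin.lastCases_castSucc] at hij
    | cast i =>
      induction j using Fin.lastCases with
      | last => simp [Fin.lastCases_last, Fin.lastCases_castSucc] at hij
      | cast j =>
        simp only [Fin.lastCases_castSucc, Sum.inl.injEq] at hij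
        exact congrArg Fin.castSucc (leaf.injective hij)

section Adjud
variable {V : Type} {G : SimpleGraph V} {e : Sym2 V}

lemma attach_adj_inl_inl {a b : V} :
    (attachGraph G e).Adj (Sum.inl a) (Sum.inl b) ↔ G.Adj a b ∧ s(a, b) ≠ e := by
  simp only [attachGraph, fromRel_adj]
  constructor
  · rintro ⟨-, h | h⟩
    · exact h
    · exact ⟨h.1.symm, by rw [Sym2.eq_swap]; exact h.2⟩
  · intro hh
    exact ⟨by simp [hh.1.ne], Or.inl hh⟩

lemma attach_adj_inl_w {a : V} :
    (attachGraph G e).Adj (Sum.inl a) (Sum.inr false) ↔ a ∈ e := by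
  simp only [attachGraph, fromRel_adj]
  constructor
  · rintro ⟨-, h | h⟩
    · exact h
    · exact h.elim
  · intro hh
    exact ⟨by simp, Or.inl hh⟩

lemma attach_adj_inl_x {a : V} :
    ¬ (attachGraph G e).Adj (Sum.inl a) (Sum.inr true) := by
  simp only [attachGraph, fromRel_adj]
  rintro ⟨-, h | h⟩ <;> exact h

lemma attach_adj_w_x :
    (attachGraph G e).Adj (Sum.inr false) (Sum.inr true) := by
  simp only [attachGraph, fromRel_adj]
  exact ⟨by simp, Or.inl trivial⟩

lemma attach_ns_x :
    (attachGraph G e).neighborSet (Sum.inr true) = {Sum.inr false} := by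
  ext z
  simp only [mem_neighborSet, Set.mem_singleton_iff]
  constructor
  · intro hz
    rcases z with a | b
    · exact absurd hz.symm (attach_adj_inl_x)
    · rcases b with _ | _
      · rfl
      · exact absurd rfl hz.ne
  · rintro rfl; exact attach_adj_w_x.symm

lemma attach_adj_w {u v : V} (z : V ⊕ Bool) :
    (attachGraph G s(u, v)).Adj (Sum.inr false) z ↔
      z = Sum.inl u ∨ z = Sum.inl v ∨ z = Sum.inr true := by
  constructor
  · intro hz
    rcases z with a | b
    · have : a ∈ s(u, v) := attach_adj_inl_w.mp hz.symm
      rcases Sym2.mem_iff.mp this with rfl | rfl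
      · exact Or.inl rfl
      · exact Or.inr (Or.inl rfl)
    · rcases b with _ | _
      · exact absurd rfl hz.ne
      · exact Or.inr (Or.inr rfl)
  · rintro (rfl | rfl | rfl)
    · exact (attach_adj_inl_w.mpr (by simp)).symm
    · exact (attach_adj_inl_w.mpr (by simp)).symm
    · exact attach_adj_w_x

lemma attach_ns_w {u v : V} :
    (attachGraph G s(u, v)).neighborSet (Sum.inr false) =
      {Sum.inl u, Sum.inl v, Sum.inr true} := by
  ext z
  simp only [mem_neighborSet, attach_adj_w, Set.mem_insert_iff, Set.mem_singleton_iff]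

lemma attach_ns_inl_not_mem {a : V} (ha : a ∉ e) :
    (attachGraph G e).neighborSet (Sum.inl a) = Sum.inl '' G.neighborSet a := by
  ext z
  simp only [mem_neighborSet, Set.mem_image]
  constructor
  · intro hz
    rcases z with b | b
    · exact ⟨b, (attach_adj_inl_inl.mp hz).1, rfl⟩
    · rcases b with _ | _
      · exact absurd (attach_adj_inl_w.mp hz) ha
      · exact absurd hz attach_adj_inl_x
  · rintro ⟨b, hb, rfl⟩
    refine attach_adj_inl_inl.mpr ⟨hb, fun hc => ha ?_⟩
    rw [← hc]; simp

lemma attach_ns_inl_mem {u v : V} (huv : G.Adj u v) :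
    (attachGraph G s(u, v)).neighborSet (Sum.inl u) =
      Sum.inl '' (G.neighborSet u \ {v}) ∪ {Sum.inr false} := by
  ext z
  simp only [mem_neighborSet, Set.mem_union, Set.mem_image, Set.mem_diff,
    Set.mem_singleton_iff]
  constructor
  · intro hz
    rcases z with b | b
    · have := attach_adj_inl_inl.mp hz
      refine Or.inl ⟨b, ⟨this.1, fun hbv => this.2 ?_⟩, rfl⟩
      rw [hbv]
    · rcases b with _ | _
      · exact Or.inr rfl
      · exact absurd hz attach_adj_inl_x
  · rintro (⟨b, ⟨hb, hbv⟩, rfl⟩ | rfl)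
    · exact attach_adj_inl_inl.mpr ⟨hb, fun hc => hbv (Sym2.congr_right.mp hc)⟩
    · exact attach_adj_inl_w.mpr (by simp)

lemma attach_ncard_ns_inl [Finite V] (he : e ∈ G.edgeSet) (a : V) :
    ((attachGraph G e).neighborSet (Sum.inl a)).ncard = (G.neighborSet a).ncard := by
  classical
  by_cases ha : a ∈ e
  · -- a is an endpoint of e
    obtain ⟨u, v, rfl⟩ : ∃ u v, e = s(u, v) := by
      induction e using Sym2.ind with | _ x y => exact ⟨x, y, rfl⟩
    have huv : G.Adj u v := he
    -- reduce to the case a = u using symmetry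
    have key : ∀ u v : V, G.Adj u v →
        ((attachGraph G s(u, v)).neighborSet (Sum.inl u)).ncard =
          (G.neighborSet u).ncard := by
      intro u v huv
      rw [attach_ns_inl_mem huv]
      have hd : Disjoint (Sum.inl '' (G.neighborSet u \ {v}) : Set (V ⊕ Bool))
          {Sum.inr false} := by
        simp only [Set.disjoint_singleton_right, Set.mem_image]
        rintro ⟨b, -, hb⟩
        exact absurd hb (by simp)
      rw [Set.ncard_union_eq hd, Set.ncard_singleton,
        Set.ncard_image_of_injective _ Sum.inl_injective,
        Set.ncard_diff_singleton_of_mem (by exact huv)]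
      have hpos : 0 < (G.neighborSet u).ncard :=
        (Set.ncard_pos).mpr ⟨v, huv⟩
      omega
    rcases Sym2.mem_iff.mp ha with rfl | rfl
    · exact key _ _ huv
    · rw [Sym2.eq_swap]
      exact key _ _ huv.symm
  · rw [attach_ns_inl_not_mem ha, Set.ncard_image_of_injective _ Sum.inl_injective]

end Adjud

section TreePart
variable {V : Type} {G : SimpleGraph V} {e : Sym2 V}

lemma sdiff_fromEdgeSet_adj {s : Set (Sym2 V)} {a b : V} :
    (G \ fromEdgeSet s).Adj a b ↔ G.Adj a b ∧ s(a, b) ∉ s := by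
  rw [sdiff_adj, fromEdgeSet_adj]
  constructor
  · rintro ⟨h1, h2⟩
    exact ⟨h1, fun hs => h2 ⟨hs, h1.ne⟩⟩
  · rintro ⟨h1, h2⟩
    exact ⟨h1, fun hs => h2 hs.1⟩

lemma exists_last_edge {V' : Type} {G' : SimpleGraph V'} {a b : V'} (p : G'.Walk a b) :
    a ≠ b → ∃ c, G'.Adj c b ∧ s(c, b) ∈ p.edges := by
  induction p with
  | nil => intro hab; exact absurd rfl hab
  | @cons a' m b' h p ih =>
    intro _
    by_cases hmb : m = b'
    · subst hmb
      exact ⟨a', h, by simp⟩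
    · obtain ⟨c, hc, hce⟩ := ih hmb
      exact ⟨c, hc, by simp [Walk.edges_cons, hce]⟩

/-- Project a walk in the attached graph avoiding the new internal vertex to reachability
in a graph `H` on `V` containing all the `inl`-`inl` edges used. -/
lemma attach_proj {H : SimpleGraph V} :
    ∀ {z1 z2 : V ⊕ Bool} (q : (attachGraph G e).Walk z1 z2),
      (∀ a b : V, s(Sum.inl a, Sum.inl b) ∈ q.edges → H.Adj a b) →
      Sum.inr false ∉ q.support →
      ∀ a b : V, z1 = Sum.inl a → z2 = Sum.inl b → H.Reachable a b := by
  intro z1 z2 q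
  induction q with
  | nil =>
    intro _ _ a b h1 h2
    rw [h1] at h2
    cases h2
    rfl
  | @cons z1 zm z2 h p ih =>
    intro hedges hsup a b h1 h2
    subst h1
    have hsup' : Sum.inr false ∉ p.support := by
      intro hmem
      exact hsup (by simp [Walk.support_cons, hmem])
    rcases zm with m | bb
    · have hadj : H.Adj a m := hedges a m (by simp [Walk.edges_cons])
      exact hadj.reachable.trans
        (ih (fun a' b' hm => hedges a' b' (by simp [Walk.edges_cons, hm])) hsup' m b rfl h2)
    · rcases bb with _ | _
      · exact absurd (by simp [Walk.support_cons, Walk.start_mem_support]) hsup'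
      · exact absurd h attach_adj_inl_x

lemma mem_edges_symm {V' : Type} {G' : SimpleGraph V'} {x y a b : V'} {p : G'.Walk x y}
    (h : s(a, b) ∈ p.edges) : s(b, a) ∈ p.edges := by
  have hsw : (s(b, a) : Sym2 V') = s(a, b) := Sym2.eq_swap
  rw [hsw]; exact h

lemma endpoint_not_mem_takeUntil {V' : Type} [DecidableEq V'] {G' : SimpleGraph V'}
    {a x y : V'} {q : G'.Walk a x} (hq : q.IsPath) (hy : y ∈ q.support) (hne : y ≠ x) :
    x ∉ (q.takeUntil y hy).support := by
  intro hx
  have h2 : ((q.takeUntil y hy).append (q.dropUntil y hy)).IsPath := by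
    rw [Walk.take_spec]; exact hq
  have hnodup := h2.support_nodup
  rw [Walk.support_append] at hnodup
  have hdisj := List.disjoint_of_nodup_append hnodup
  refine hdisj hx ?_
  have hxd : x ∈ (q.dropUntil y hy).support := Walk.end_mem_support _
  rw [Walk.support_eq_cons, List.mem_cons] at hxd
  rcases hxd with h | h
  · exact absurd h.symm hne
  · exact h

lemma attach_connected (he : e ∈ G.edgeSet) (hG : G.Connected) :
    (attachGraph G e).Connected := by
  obtain ⟨u, v, rfl⟩ : ∃ u v, e = s(u, v) := by
    induction e using Sym2.ind with | _ x y => exact ⟨x, y, rfl⟩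
  have lift : ∀ {a b : V} (p : G.Walk a b),
      (attachGraph G s(u, v)).Reachable (Sum.inl a) (Sum.inl b) := by
    intro a b p
    induction p with
    | nil => rfl
    | @cons a m b h p ih =>
      refine Reachable.trans ?_ ih
      by_cases hse : s(a, m) = s(u, v)
      · have ha : a ∈ s(u, v) := by rw [← hse]; simp
        have hm : m ∈ s(u, v) := by rw [← hse]; simp
        exact (attach_adj_inl_w.mpr ha).reachable.trans
          ((attach_adj_inl_w.mpr hm).symm.reachable)
      · exact (attach_adj_inl_inl.mpr ⟨h, hse⟩).reachable
  have hreach : ∀ z : V ⊕ Bool,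
      (attachGraph G s(u, v)).Reachable z (Sum.inr false) := by
    intro z
    rcases z with a | b
    · obtain ⟨p⟩ := hG a u
      exact (lift p).trans (attach_adj_inl_w.mpr (by simp)).reachable
    · rcases b with _ | _
      · rfl
      · exact attach_adj_w_x.symm.reachable
  haveI : Nonempty (V ⊕ Bool) := ⟨Sum.inr false⟩
  exact ⟨fun z z' => (hreach z).trans (hreach z').symm⟩

lemma attach_isAcyclic (he : e ∈ G.edgeSet) (hT : G.IsTree) :
    (attachGraph G e).IsAcyclic := by
  classical
  obtain ⟨u, v, rfl⟩ : ∃ u v, e = s(u, v) := by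
    induction e using Sym2.ind with | _ x y => exact ⟨x, y, rfl⟩
  have huv : G.Adj u v := he
  intro z c hc
  -- Step 1 : the new leaf is not on any cycle
  have hx : ∀ {z : V ⊕ Bool} (c : (attachGraph G s(u,v)).Walk z z), c.IsCycle →
      Sum.inr true ∉ c.support := by
    intro z c hc hxs
    set c' := c.rotate _ hxs with hc'def
    have hc' : c'.IsCycle := hc.rotate hxs
    cases hcc : c' with
    | nil => exact hc'.ne_nil (by rw [hcc])
    | @cons _ zm _ h rest =>
      have hzm : zm = Sum.inr false := by
        have := attach_ns_x (G := G) (e := s(u,v)) ▸ (mem_neighborSet _ _ _).mpr h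
        simpa using this
      subst hzm
      rw [hcc] at hc'
      rw [Walk.cons_isCycle_iff] at hc'
      obtain ⟨hpath, hne⟩ := hc'
      obtain ⟨cE, hcE, hcEe⟩ := exists_last_edge rest (by simp)
      have : cE = Sum.inr false := by
        have := attach_ns_x (G := G) (e := s(u,v)) ▸ (mem_neighborSet _ _ _).mpr hcE.symm
        simpa using this
      subst this
      exact hne (mem_edges_symm hcEe)
  -- Step 2 : the new internal vertex is not on any cycle
  have hbridge : ¬ (G \ fromEdgeSet {s(u, v)}).Reachable u v := by
    have := (isAcyclic_iff_forall_adj_isBridge.mp hT.IsAcyclic) huv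
    rw [isBridge_iff] at this
    exact this
  have hw : Sum.inr false ∉ c.support := by
    intro hws
    have hxc : Sum.inr true ∉ c.support := hx c hc
    set c' := c.rotate _ hws with hc'def
    have hc' : c'.IsCycle := hc.rotate hws
    have hxc' : Sum.inr true ∉ c'.support := by
      intro hmem
      rw [Walk.support_eq_cons, List.mem_cons] at hmem
      rcases hmem with hh | hh
      · exact (by simp : Sum.inr (α := V) true ≠ Sum.inr false) hh
      · have hperm := Walk.support_rotate c _ hws
        have : Sum.inr true ∈ c.support.tail := hperm.mem_iff.mp hh
        exact hxc (List.mem_of_mem_tail this)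
    cases hcc : c' with
    | nil => exact hc'.ne_nil (by rw [hcc])
    | @cons _ zm _ h rest =>
      -- zm is inl u or inl v
      have hrest_sub : ∀ t, t ∈ rest.support → t ∈ c'.support := by
        intro t ht; rw [hcc, Walk.support_cons]; exact List.mem_cons_of_mem _ ht
      have hzm : zm = Sum.inl u ∨ zm = Sum.inl v := by
        rcases (attach_adj_w zm).mp h with h1 | h1 | h1
        · exact Or.inl h1
        · exact Or.inr h1
        · exact absurd (hrest_sub _ (h1 ▸ Walk.start_mem_support rest)) hxc'
      rw [hcc] at hc'
      rw [Walk.cons_isCycle_iff] at hc'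
      obtain ⟨hpath, hne⟩ := hc'
      have hzmw : zm ≠ Sum.inr false := h.ne'
      obtain ⟨cE, hcE, hcEe⟩ := exists_last_edge rest hzmw
      have hcEmem : cE ∈ rest.support := Walk.fst_mem_support_of_mem_edges _ hcEe
      have hcEu : cE = Sum.inl u ∨ cE = Sum.inl v := by
        rcases (attach_adj_w cE).mp hcE.symm with h1 | h1 | h1
        · exact Or.inl h1
        · exact Or.inr h1
        · exact absurd (hrest_sub _ (h1 ▸ hcEmem)) hxc'
      have hcEzm : cE ≠ zm := by
        rintro rfl
        exact hne (mem_edges_symm hcEe)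
      -- take the portion of rest from zm to cE : avoids inr false
      set q := rest.takeUntil cE hcEmem with hqdef
      have hwq : Sum.inr false ∉ q.support :=
        endpoint_not_mem_takeUntil hpath hcEmem hcE.ne
      have hedges : ∀ a b : V, s(Sum.inl a, Sum.inl b) ∈ q.edges →
          (G \ fromEdgeSet {s(u, v)}).Adj a b := by
        intro a b hm
        have hadj : (attachGraph G s(u,v)).Adj (Sum.inl a) (Sum.inl b) :=
          q.edges_subset_edgeSet hm
        rw [attach_adj_inl_inl] at hadj
        exact sdiff_fromEdgeSet_adj.mpr ⟨hadj.1, by simpa using hadj.2⟩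
      have hreach : ∀ a b : V, zm = Sum.inl a → cE = Sum.inl b →
          (G \ fromEdgeSet {s(u, v)}).Reachable a b :=
        fun a b h1 h2 => attach_proj q hedges hwq a b h1 h2
      rcases hzm with rfl | rfl
      · rcases hcEu with rfl | rfl
        · exact absurd rfl hcEzm
        · exact hbridge (hreach u v rfl rfl)
      · rcases hcEu with rfl | rfl
        · exact hbridge (hreach v u rfl rfl).symm
        · exact absurd rfl hcEzm
  -- Step 3 : an all-`inl` cycle projects to a cycle-free contradiction in G
  have hz : ∃ a : V, z = Sum.inl a := by
    have hzs : z ∈ c.support := Walk.start_mem_support c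
    rcases z with a | b
    · exact ⟨a, rfl⟩
    · rcases b with _ | _
      · exact absurd hzs hw
      · exact absurd hzs (hx c hc)
  obtain ⟨a, rfl⟩ := hz
  cases hcc : c with
  | nil => exact hc.ne_nil (by rw [hcc])
  | @cons _ zm _ h rest =>
    have hsub : ∀ t, t ∈ rest.support → t ∈ c.support := by
      intro t ht
      rw [hcc, Walk.support_cons]
      exact List.mem_cons_of_mem _ ht
    have hzm : ∃ b : V, zm = Sum.inl b := by
      rcases zm with b | bb
      · exact ⟨b, rfl⟩
      · rcases bb with _ | _
        · exact absurd (hsub _ (Walk.start_mem_support rest)) hw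
        · exact absurd h attach_adj_inl_x
    obtain ⟨b, rfl⟩ := hzm
    have hab : G.Adj a b ∧ s(a, b) ≠ s(u, v) := attach_adj_inl_inl.mp h
    rw [hcc] at hc
    rw [Walk.cons_isCycle_iff] at hc
    obtain ⟨hpath, hne⟩ := hc
    have habridge : ¬ (G \ fromEdgeSet {s(a, b)}).Reachable a b := by
      have := (isAcyclic_iff_forall_adj_isBridge.mp hT.IsAcyclic) hab.1
      rw [isBridge_iff] at this
      exact this
    have hwrest : Sum.inr false ∉ rest.support := fun hmem => hw (hsub _ hmem)
    have hedges : ∀ a' b' : V, s(Sum.inl a', Sum.inl b') ∈ rest.edges →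
        (G \ fromEdgeSet {s(a, b)}).Adj a' b' := by
      intro a' b' hm
      have hadj : (attachGraph G s(u,v)).Adj (Sum.inl a') (Sum.inl b') :=
        rest.edges_subset_edgeSet hm
      rw [attach_adj_inl_inl] at hadj
      refine sdiff_fromEdgeSet_adj.mpr ⟨hadj.1, ?_⟩
      simp only [Set.mem_singleton_iff]
      intro hss
      apply hne
      have : s(Sum.inl a', Sum.inl b') = (s(Sum.inl a, Sum.inl b) : Sym2 (V ⊕ Bool)) := by
        have := congrArg (Sym2.map (Sum.inl : V → V ⊕ Bool)) hss
        simpa [Sym2.map_pair_eq] using this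
      rwa [← this]
    exact habridge (attach_proj rest hedges hwrest b a rfl rfl).symm

end TreePart

section PhyloPart
variable {V : Type} {n : ℕ} {G : SimpleGraph V} {e : Sym2 V} {leaf : Fin n ↪ V}

lemma attachLeaf_last : attachLeaf leaf (Fin.last n) = Sum.inr true := by
  show Fin.lastCases (motive := fun _ => V ⊕ Bool) (Sum.inr true) (fun i => Sum.inl (leaf i)) (Fin.last n) = _
  simp

lemma attachLeaf_castSucc (i : Fin n) :
    attachLeaf leaf (Fin.castSucc i) = Sum.inl (leaf i) := by
  show Fin.lastCases (motive := fun _ => V ⊕ Bool) (Sum.inr true) (fun i => Sum.inl (leaf i)) (Fin.castSucc i) = _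
  simp

lemma attach_ncard_ns_w (huv : e ∈ G.edgeSet) :
    ((attachGraph G e).neighborSet (Sum.inr false)).ncard = 3 := by
  obtain ⟨u, v, rfl⟩ : ∃ u v, e = s(u, v) := by
    induction e using Sym2.ind with | _ x y => exact ⟨x, y, rfl⟩
  have hne : u ≠ v := (huv : G.Adj u v).ne
  rw [attach_ns_w]
  rw [Set.ncard_insert_of_notMem (by simp [hne]) (Set.toFinite _),
    Set.ncard_insert_of_notMem (by simp) (Set.toFinite _), Set.ncard_singleton]

lemma attach_isPhylo (he : e ∈ G.edgeSet) (h : IsPhylo G leaf) :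
    IsPhylo (attachGraph G e) (attachLeaf leaf) := by
  haveI := h.finite
  refine ⟨inferInstance, ⟨attach_connected he h.isTree.isConnected,
    attach_isAcyclic he h.isTree⟩, ?_, ?_⟩
  · intro z
    rcases z with a | b
    · rw [attach_ncard_ns_inl he]
      exact h.deg a
    · rcases b with _ | _
      · exact Or.inr (attach_ncard_ns_w he)
      · rw [attach_ns_x, Set.ncard_singleton]
        exact Or.inl rfl
  · intro z
    rcases z with a | b
    · rw [attach_ncard_ns_inl he, h.leafIff a]
      constructor
      · rintro ⟨j, hj⟩
        exact ⟨Fin.castSucc j, by rw [attachLeaf_castSucc, hj]⟩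
      · rintro ⟨i, hi⟩
        induction i using Fin.lastCases with
        | last => rw [attachLeaf_last] at hi; exact absurd hi (by simp)
        | cast j =>
          rw [attachLeaf_castSucc] at hi
          exact ⟨j, Sum.inl_injective hi⟩
    · rcases b with _ | _
      · rw [attach_ncard_ns_w he]
        constructor
        · intro h31; exact absurd h31 (by norm_num)
        · rintro ⟨i, hi⟩
          induction i using Fin.lastCases with
          | last => rw [attachLeaf_last] at hi; exact absurd hi (by simp)
          | cast j => rw [attachLeaf_castSucc] at hi; exact absurd hi (by simp)
      · rw [attach_ns_x, Set.ncard_singleton]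
        simp only [true_iff]
        exact ⟨Fin.last n, attachLeaf_last⟩

end PhyloPart

section FixPart

lemma SimpleGraph.Walk.getVert_cons_one {V : Type*} {G : SimpleGraph V} {u v w : V}
    (p : G.Walk v w) (h : G.Adj u v) : (Walk.cons h p).getVert 1 = v := by
  rw [Walk.getVert_cons_succ, Walk.getVert_zero]

lemma list_map_eq_self {α : Type*} {f : α → α} :
    ∀ {l : List α}, l.map f = l → ∀ x ∈ l, f x = x := by
  intro l
  induction l with
  | nil => intro _ x hx; exact absurd hx List.not_mem_nil
  | cons a l ih =>
    intro hmap x hx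
    rw [List.map_cons, List.cons.injEq] at hmap
    rcases List.mem_cons.mp hx with rfl | hx
    · exact hmap.1
    · exact ih hmap.2 x hx

lemma sym2_eq_of_mem {α : Type*} {x y : α} {z : Sym2 α} (hx : x ∈ z) (hy : y ∈ z)
    (hxy : x ≠ y) : s(x, y) = z := by
  induction z using Sym2.ind with
  | _ a b =>
    rw [Sym2.mem_iff] at hx hy
    rcases hx with rfl | rfl <;> rcases hy with rfl | rfl
    · exact absurd rfl hxy
    · rfl
    · exact Sym2.eq_swap
    · exact absurd rfl hxy

variable {V : Type}

lemma neighbor_eq_of_mem_support [DecidableEq V] {G : SimpleGraph V} (hac : G.IsAcyclic)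
    {a x y : V} {q : G.Walk a x} (hq : q.IsPath) (hxy : G.Adj x y) (hmem : y ∈ q.support) :
    y = q.reverse.getVert 1 := by
  have hyx : y ≠ x := hxy.ne'
  set t := q.takeUntil y hmem with htdef
  have htp : t.IsPath := hq.takeUntil hmem
  have hxt : x ∉ t.support := endpoint_not_mem_takeUntil hq hmem hyx
  have hr : (t.concat hxy.symm).IsPath := by
    rw [← Walk.isPath_reverse_iff, Walk.reverse_concat]
    exact (Walk.cons_isPath_iff _ _).mpr
      ⟨htp.reverse, by rwa [Walk.support_reverse, List.mem_reverse]⟩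
  have huniq := hac.path_unique ⟨t.concat hxy.symm, hr⟩ ⟨q, hq⟩
  have heq : t.concat hxy.symm = q := congrArg Subtype.val huniq
  rw [← heq, Walk.reverse_concat, Walk.getVert_cons_one]

lemma exists_branch_leaf [Finite V] {G : SimpleGraph V} (hT : G.IsTree)
    (hdeg : ∀ v : V, (G.neighborSet v).ncard = 1 ∨ (G.neighborSet v).ncard = 3)
    {v a : V} (hva : G.Adj v a) :
    ∃ (ℓ : V) (q : G.Walk a ℓ), q.IsPath ∧ v ∉ q.support ∧ (G.neighborSet ℓ).ncard = 1 := by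
  classical
  haveI : Fintype V := Fintype.ofFinite V
  set S : Set ℕ :=
    {m | ∃ (x : V) (q : G.Walk a x), q.IsPath ∧ v ∉ q.support ∧ q.length = m} with hSdef
  have hS0 : 0 ∈ S := ⟨a, Walk.nil, by simp, by simp [hva.ne], rfl⟩
  have hbdd : BddAbove S := by
    refine ⟨Fintype.card V, fun m hm => ?_⟩
    obtain ⟨x, q, hq, -, rfl⟩ := hm
    exact le_of_lt hq.length_lt
  have hmem := Nat.sSup_mem ⟨0, hS0⟩ hbdd
  obtain ⟨x, q, hq, hv, hlen⟩ := hmem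
  rcases hdeg x with h1 | h3
  · exact ⟨x, q, hq, hv, h1⟩
  exfalso
  set pen := q.reverse.getVert 1 with hpendef
  have hnsub : ¬ (G.neighborSet x ⊆ {v, pen}) := by
    intro hsub
    have hle := Set.ncard_le_ncard hsub (Set.toFinite _)
    have h2 : ({v, pen} : Set V).ncard ≤ 2 := by
      refine le_trans (Set.ncard_insert_le _ _) ?_
      simp
    omega
  obtain ⟨y, hy, hyn⟩ := Set.not_subset.mp hnsub
  simp only [Set.mem_insert_iff, Set.mem_singleton_iff, not_or] at hyn
  have hadjxy : G.Adj x y := hy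
  have hynots : y ∉ q.support := fun hm =>
    hyn.2 (neighbor_eq_of_mem_support hT.IsAcyclic hq hadjxy hm)
  have hnew : (q.concat hadjxy).IsPath := by
    rw [← Walk.isPath_reverse_iff, Walk.reverse_concat]
    exact (Walk.cons_isPath_iff _ _).mpr
      ⟨hq.reverse, by rwa [Walk.support_reverse, List.mem_reverse]⟩
  have hvnew : v ∉ (q.concat hadjxy).support := by
    rw [Walk.support_concat]
    intro hmem
    rcases List.mem_append.mp hmem with hmem | hmem
    · exact hv hmem
    · rw [List.mem_singleton] at hmem
      exact hyn.1 hmem.symm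
  have hS1 : q.length + 1 ∈ S := ⟨y, q.concat hadjxy, hnew, hvnew, Walk.length_concat _ _⟩
  have hle := le_csSup hbdd hS1
  rw [← hlen] at hle
  omega

lemma fix_of_leaf_fixed [Finite V] {n : ℕ} {G : SimpleGraph V} {leaf : Fin n ↪ V}
    (h : IsPhylo G leaf) {f : V → V} (hinj : Function.Injective f)
    (hadj : ∀ a b, G.Adj a b → G.Adj (f a) (f b)) (hleaf : ∀ i, f (leaf i) = leaf i)
    (t : V) : f t = t := by
  classical
  have hfixleafdeg : ∀ s : V, (G.neighborSet s).ncard = 1 → f s = s := by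
    intro s hs
    obtain ⟨i, rfl⟩ := (h.leafIff s).mp hs
    exact hleaf i
  rcases h.deg t with h1 | h3
  · exact hfixleafdeg t h1
  have h2 : 1 < (G.neighborSet t).ncard := by omega
  obtain ⟨a₁, a₂, ha₁, ha₂, hne⟩ := (Set.one_lt_ncard_iff (Set.toFinite _)).mp h2
  have hadj1 : G.Adj t a₁ := ha₁
  have hadj2 : G.Adj t a₂ := ha₂
  obtain ⟨ℓ₁, q₁, hq₁, ht₁, hd₁⟩ := exists_branch_leaf h.isTree h.deg hadj1
  obtain ⟨ℓ₂, q₂, hq₂, ht₂, hd₂⟩ := exists_branch_leaf h.isTree h.deg hadj2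
  set p₁ := Walk.cons hadj1 q₁ with hp₁def
  set p₂ := Walk.cons hadj2 q₂ with hp₂def
  have hp₁ : p₁.IsPath := (Walk.cons_isPath_iff _ _).mpr ⟨hq₁, ht₁⟩
  have hp₂ : p₂.IsPath := (Walk.cons_isPath_iff _ _).mpr ⟨hq₂, ht₂⟩
  have hinter : ∀ z, z ∈ p₁.support → z ∈ p₂.support → z = t := by
    intro z hz1 hz2
    by_contra hzt
    rw [hp₁def, Walk.support_cons, List.mem_cons] at hz1
    rw [hp₂def, Walk.support_cons, List.mem_cons] at hz2
    rcases hz1 with rfl | hz1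
    · exact hzt rfl
    rcases hz2 with rfl | hz2
    · exact hzt rfl
    have ht1' : t ∉ (q₁.takeUntil z hz1).support :=
      fun hm => ht₁ (Walk.support_takeUntil_subset _ _ hm)
    have ht2' : t ∉ (q₂.takeUntil z hz2).support :=
      fun hm => ht₂ (Walk.support_takeUntil_subset _ _ hm)
    have path1 : (Walk.cons hadj1 (q₁.takeUntil z hz1)).IsPath :=
      (Walk.cons_isPath_iff _ _).mpr ⟨hq₁.takeUntil hz1, ht1'⟩
    have path2 : (Walk.cons hadj2 (q₂.takeUntil z hz2)).IsPath :=
      (Walk.cons_isPath_iff _ _).mpr ⟨hq₂.takeUntil hz2, ht2'⟩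
    have huniq := h.isTree.IsAcyclic.path_unique ⟨_, path1⟩ ⟨_, path2⟩
    have heq := congrArg (fun p : G.Path t z => (p : G.Walk t z).getVert 1) huniq
    simp only [Walk.getVert_cons_one] at heq
    exact hne heq
  set c := p₁.reverse.append p₂ with hcdef
  have htail : p₂.support.tail = q₂.support := by
    rw [hp₂def, Walk.support_cons, List.tail_cons]
  have hc : c.IsPath := by
    rw [Walk.isPath_def, hcdef, Walk.support_append, Walk.support_reverse, List.nodup_append]
    refine ⟨List.nodup_reverse.mpr hp₁.support_nodup, ?_, ?_⟩
    · rw [htail]; exact hq₂.support_nodup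
    · intro z hz1 b hz2 hzb
      subst hzb
      rw [List.mem_reverse] at hz1
      rw [htail] at hz2
      have hzt : z = t := hinter z hz1 (by rw [hp₂def, Walk.support_cons]; exact List.mem_cons_of_mem _ hz2)
      exact ht₂ (hzt ▸ hz2)
  have htc : t ∈ c.support := by
    rw [hcdef, Walk.mem_support_append_iff]
    left
    rw [Walk.support_reverse, List.mem_reverse]
    exact Walk.start_mem_support p₁
  have hfℓ₁ : f ℓ₁ = ℓ₁ := hfixleafdeg _ hd₁
  have hfℓ₂ : f ℓ₂ = ℓ₂ := hfixleafdeg _ hd₂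
  let fhom : G →g G := ⟨f, fun {a b} hab => hadj a b hab⟩
  have hinj' : Function.Injective (fhom : V → V) := hinj
  set c2 := (c.map fhom).copy hfℓ₁ hfℓ₂ with hc2def
  have hc2 : c2.IsPath := by
    rw [hc2def, Walk.isPath_copy]
    exact Walk.map_isPath_of_injective hinj' hc
  have huniq := h.isTree.IsAcyclic.path_unique ⟨c, hc⟩ ⟨c2, hc2⟩
  have heq : c = c2 := congrArg Subtype.val huniq
  have hsup : c.support.map f = c.support := by
    conv_rhs => rw [heq]
    rw [hc2def, Walk.support_copy, Walk.support_map]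
    rfl
  exact list_map_eq_self hsup t htc

end FixPart

/-- Attaching a new leaf to an edge of an unrooted bifurcating tree with `n` leaves yields
an unrooted bifurcating tree with `n+1` leaves, and distinct choices of edge yield
non-isomorphic results as leaf-labeled trees. -/
theorem attach_leaf_phylo_and_injective {V : Type} {n : ℕ} (hn : 3 ≤ n)
    (G : SimpleGraph V) (leaf : Fin n ↪ V) (h : IsPhylo G leaf) :
    (∀ e ∈ G.edgeSet, IsPhylo (attachGraph G e) (attachLeaf leaf)) ∧
    (∀ e ∈ G.edgeSet, ∀ e' ∈ G.edgeSet, e ≠ e' →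
      ¬ LabeledIso (attachGraph G e) (attachLeaf leaf)
          (attachGraph G e') (attachLeaf leaf)) := by
  classical
  constructor
  · intro e he
    exact attach_isPhylo he h
  · rintro e he e' he' hnee ⟨φ, hφ, hφleaf⟩
    haveI := h.finite
    have hxfix : φ (Sum.inr true) = Sum.inr true := by
      have hl := hφleaf (Fin.last n)
      rwa [attachLeaf_last] at hl
    have hwfix : φ (Sum.inr false) = Sum.inr false := by
      have hadj : (attachGraph G e).Adj (Sum.inr false) (Sum.inr true) := attach_adj_w_x
      have h2 := (hφ _ _).mp hadj
      rw [hxfix] at h2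
      have hmem : φ (Sum.inr false) ∈ (attachGraph G e').neighborSet (Sum.inr true) := h2.symm
      rw [attach_ns_x] at hmem
      exact hmem
    have hinlex : ∀ a : V, ∃ b : V, φ (Sum.inl a) = Sum.inl b := by
      intro a
      rcases hq : φ (Sum.inl a) with b | bb
      · exact ⟨b, rfl⟩
      · rcases bb with _ | _
        · exact absurd (φ.injective (hq.trans hwfix.symm)) (by simp)
        · exact absurd (φ.injective (hq.trans hxfix.symm)) (by simp)
    choose f hf using hinlex
    have hfinj : Function.Injective f := by
      intro a b hab
      have h2 : φ (Sum.inl a) = φ (Sum.inl b) := by rw [hf, hf, hab]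
      exact Sum.inl_injective (φ.injective h2)
    have hfleaf : ∀ i, f (leaf i) = leaf i := by
      intro i
      have h1 := hφleaf (Fin.castSucc i)
      rw [attachLeaf_castSucc, hf] at h1
      exact Sum.inl_injective h1
    have hmem_e' : ∀ a : V, a ∈ e → f a ∈ e' := by
      intro a ha
      have hadj : (attachGraph G e).Adj (Sum.inl a) (Sum.inr false) := attach_adj_inl_w.mpr ha
      have h2 := (hφ _ _).mp hadj
      rw [hf, hwfix] at h2
      exact attach_adj_inl_w.mp h2
    have hfadj : ∀ a b, G.Adj a b → G.Adj (f a) (f b) := by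
      intro a b hab
      by_cases hse : s(a, b) = e
      · have ha : a ∈ e := by rw [← hse]; simp
        have hb : b ∈ e := by rw [← hse]; simp
        have hfa := hmem_e' a ha
        have hfb := hmem_e' b hb
        have hfne : f a ≠ f b := fun hcon => hab.ne (hfinj hcon)
        have he'' : s(f a, f b) = e' := sym2_eq_of_mem hfa hfb hfne
        have hmm : s(f a, f b) ∈ G.edgeSet := by rw [he'']; exact he'
        exact hmm
      · have hadj : (attachGraph G e).Adj (Sum.inl a) (Sum.inl b) :=
          attach_adj_inl_inl.mpr ⟨hab, hse⟩
        have h2 := (hφ _ _).mp hadj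
        rw [hf, hf] at h2
        exact (attach_adj_inl_inl.mp h2).1
    have hfix := fix_of_leaf_fixed h hfinj hfadj hfleaf
    obtain ⟨u, v, rfl⟩ : ∃ u v, e = s(u, v) := by
      induction e using Sym2.ind with | _ x y => exact ⟨x, y, rfl⟩
    have huv : G.Adj u v := he
    have h1 := hmem_e' u (by simp)
    have h2 := hmem_e' v (by simp)
    rw [hfix u] at h1
    rw [hfix v] at h2
    exact hnee (sym2_eq_of_mem h1 h2 huv.ne)
end

section
/- The Robinson–Foulds distance D_RF(τ₁,τ₂) = |P(τ₁) Δ P(τ₂)| defines a metric on the set of unrooted bifurcating tree topologies with a fixed leaf set, where P(τ) is the set of leaf bipartitions induced by the edges of τ; in particular D_RF(τ₁,τ₂) = 0 implies τ₁ = τ₂ as leaf-labeled trees. -/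
open SimpleGraph

/-- The side of the leaf bipartition induced by the edge `(u,v)` of a tree consisting of the
leaves closer to `u` than to `v`. -/
def splitAt {V : Type} {N : ℕ} (G : SimpleGraph V) (leaf : Fin N ↪ V) (u v : V) :
    Set (Fin N) :=
  {i | G.dist (leaf i) u < G.dist (leaf i) v}

/-- The set of leaf bipartitions induced by the edges of a tree, canonically represented by
the side not containing the first leaf. -/
def rfSplits {V : Type} {N : ℕ} (hN : 0 < N) (G : SimpleGraph V) (leaf : Fin N ↪ V) :
    Set (Set (Fin N)) :=
  {A | (∃ u v, G.Adj u v ∧ A = splitAt G leaf u v) ∧ (⟨0, hN⟩ : Fin N) ∉ A}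

/-- The Robinson–Foulds distance: the cardinality of the symmetric difference of the sets of
edge-induced leaf bipartitions. -/
noncomputable def rfDist {V₁ V₂ : Type} {N : ℕ} (hN : 0 < N)
    (G₁ : SimpleGraph V₁) (leaf₁ : Fin N ↪ V₁)
    (G₂ : SimpleGraph V₂) (leaf₂ : Fin N ↪ V₂) : ℕ :=
  (symmDiff (rfSplits hN G₁ leaf₁) (rfSplits hN G₂ leaf₂)).ncard

namespace RFAux

variable {V : Type} {G : SimpleGraph V}

lemma exists_spath (hT : G.IsTree) (x u : V) :
    ∃ p : G.Walk x u, p.IsPath ∧ p.length = G.dist x u := by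
  classical
  obtain ⟨w, hw⟩ := (hT.isConnected).exists_walk_length_eq_dist x u
  refine ⟨w.bypass, w.bypass_isPath, le_antisymm ?_ (SimpleGraph.dist_le _)⟩
  calc w.bypass.length ≤ w.length := w.length_bypass_le
    _ = G.dist x u := hw

lemma support_bound {x u y : V} (p : G.Walk x u) (hy : y ∈ p.support) :
    G.dist x y + G.dist y u ≤ p.length := by
  classical
  have h1 := SimpleGraph.dist_le (p.takeUntil y hy)
  have h2 := SimpleGraph.dist_le (p.dropUntil y hy)
  have h3 : (p.takeUntil y hy).length + (p.dropUntil y hy).length = p.length := by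
    rw [← SimpleGraph.Walk.length_append, SimpleGraph.Walk.take_spec]
  omega

lemma path_length_eq_dist (hT : G.IsTree) {x u : V} (p : G.Walk x u) (hp : p.IsPath) :
    p.length = G.dist x u := by
  obtain ⟨q, hq, hlq⟩ := exists_spath hT x u
  rw [(hT.existsUnique_path x u).unique hp hq, hlq]

lemma dist_adj (hT : G.IsTree) {u v : V} (h : G.Adj u v) : G.dist u v = 1 :=
  SimpleGraph.dist_eq_one_iff_adj.mpr h

lemma adj_dist_cases (hT : G.IsTree) {u v : V} (h : G.Adj u v) (x : V) :
    G.dist x u + 1 = G.dist x v ∨ G.dist x v + 1 = G.dist x u := by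
  have hc := hT.isConnected
  have huv : G.dist u v = 1 := dist_adj hT h
  have hvu : G.dist v u = 1 := by rw [SimpleGraph.dist_comm]; exact huv
  have hne : G.dist x u ≠ G.dist x v := by
    intro he
    obtain ⟨p, hp, hlp⟩ := exists_spath hT x u
    obtain ⟨q, hq, hlq⟩ := exists_spath hT x v
    have hvp : v ∉ p.support := by
      intro hvp
      have hb := support_bound p hvp
      have := hc.pos_dist_of_ne (G.ne_of_adj h).symm  -- v ≠ u? ne_of_adj : u ≠ v
      omega
    have hcat : (p.concat h).IsPath := by
      rw [← SimpleGraph.Walk.isPath_reverse_iff, SimpleGraph.Walk.reverse_concat]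
      exact hp.reverse.cons (by
        rw [SimpleGraph.Walk.support_reverse]; simpa using hvp)
    have heq := (hT.existsUnique_path x v).unique hcat hq
    have hlen : (p.concat h).length = q.length := by rw [heq]
    rw [SimpleGraph.Walk.length_concat, hlp, hlq] at hlen
    omega
  have t1 : G.dist x v ≤ G.dist x u + 1 := by
    have := hc.dist_triangle (u := x) (v := u) (w := v); omega
  have t2 : G.dist x u ≤ G.dist x v + 1 := by
    have := hc.dist_triangle (u := x) (v := v) (w := u); omega
  omega

/-- unique neighbour decreasing the distance -/
lemma unique_step (hT : G.IsTree) {x y₁ y₂ v : V} (h1 : G.Adj x y₁) (h2 : G.Adj x y₂)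
    (d1 : G.dist y₁ v + 1 = G.dist x v) (d2 : G.dist y₂ v + 1 = G.dist x v) : y₁ = y₂ := by
  have hc := hT.isConnected
  obtain ⟨p₁, hp₁, hl₁⟩ := exists_spath hT y₁ v
  obtain ⟨p₂, hp₂, hl₂⟩ := exists_spath hT y₂ v
  have hx1 : x ∉ p₁.support := by
    intro hx
    have hb := support_bound p₁ hx
    have := hc.pos_dist_of_ne (G.ne_of_adj h1).symm
    rw [SimpleGraph.dist_comm (u := y₁)] at hb
    omega
  have hx2 : x ∉ p₂.support := by
    intro hx
    have hb := support_bound p₂ hx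
    have := hc.pos_dist_of_ne (G.ne_of_adj h2).symm
    rw [SimpleGraph.dist_comm (u := y₂)] at hb
    omega
  have hP1 : (SimpleGraph.Walk.cons h1 p₁).IsPath := hp₁.cons hx1
  have hP2 : (SimpleGraph.Walk.cons h2 p₂).IsPath := hp₂.cons hx2
  have heq := (hT.existsUnique_path x v).unique hP1 hP2
  have hy : y₁ ∈ (SimpleGraph.Walk.cons h2 p₂).support := by
    rw [← heq]; simp [SimpleGraph.Walk.support_cons]
  rw [SimpleGraph.Walk.support_cons] at hy
  rcases List.mem_cons.mp hy with hxy | hy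
  · exact absurd hxy (G.ne_of_adj h1).symm
  · have hb := support_bound p₂ hy
    have : G.dist y₂ y₁ = 0 := by omega
    exact ((hc y₂ y₁).dist_eq_zero_iff.mp this).symm

/-- the only edge crossing its own bipartition is the edge itself -/
lemma crossing (hT : G.IsTree) {u v a b : V} (huv : G.Adj u v) (hab : G.Adj a b)
    (ha : G.dist a u < G.dist a v) (hb : G.dist b v < G.dist b u) : a = u ∧ b = v := by
  have hc := hT.isConnected
  have h1 : G.dist a u + 1 = G.dist a v := by
    rcases adj_dist_cases hT huv a with h | h; · exact h
    · omega
  have h2 : G.dist b v + 1 = G.dist b u := by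
    rcases adj_dist_cases hT huv b with h | h; · omega
    · exact h
  have hd1 : G.dist a b = 1 := dist_adj hT hab
  have t1 : G.dist a v ≤ G.dist a b + G.dist b v := hc.dist_triangle
  have t2 : G.dist b u ≤ G.dist b a + G.dist a u := hc.dist_triangle
  have hba : G.dist b a = 1 := by rw [SimpleGraph.dist_comm]; exact hd1
  have hk : G.dist b v = G.dist a u := by omega
  by_cases h0 : G.dist a u = 0
  · constructor
    · exact (hc a u).dist_eq_zero_iff.mp h0
    · exact (hc b v).dist_eq_zero_iff.mp (by omega)
  · exfalso
    -- k ≥ 1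
    obtain ⟨pau, hpau, hlau⟩ := exists_spath hT a u
    obtain ⟨pbv, hpbv, hlbv⟩ := exists_spath hT b v
    have hbp : b ∉ pau.support := by
      intro hmem
      have := support_bound pau hmem
      rw [SimpleGraph.dist_comm (u := a) (v := b)] at this
      omega
    have hP1 : (SimpleGraph.Walk.cons hab.symm pau).IsPath := hpau.cons hbp
    have hup : u ∉ pbv.support := by
      intro hmem
      have := support_bound pbv hmem
      rw [SimpleGraph.dist_comm (u := u) (v := v)] at this
      omega
    have hP2 : (pbv.concat huv.symm).IsPath := by
      rw [← SimpleGraph.Walk.isPath_reverse_iff, SimpleGraph.Walk.reverse_concat]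
      exact hpbv.reverse.cons (by rw [SimpleGraph.Walk.support_reverse]; simpa using hup)
    have heq := (hT.existsUnique_path b u).unique hP1 hP2
    have hmem : a ∈ (pbv.concat huv.symm).support := by
      rw [← heq]; simp [SimpleGraph.Walk.support_cons]
    rw [SimpleGraph.Walk.support_concat] at hmem
    rcases List.mem_append.mp hmem with hmem | hmem
    · have := support_bound pbv hmem
      rw [SimpleGraph.dist_comm (u := b) (v := a)] at this
      omega
    · simp at hmem
      subst hmem
      omega


/-- distance additivity across a separating edge -/
lemma dist_cross (hT : G.IsTree) {p q : V} (h : G.Adj p q) :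
    ∀ n a b, G.dist a b = n → G.dist a p < G.dist a q → G.dist b q < G.dist b p →
      G.dist a b = G.dist a p + 1 + G.dist q b := by
  have hc := hT.isConnected
  intro n
  induction n using Nat.strong_induction_on with
  | _ n IH =>
    intro a b hn ha hb
    have hab : a ≠ b := by rintro rfl; omega
    have hpos : 0 < G.dist a b := hc.pos_dist_of_ne hab
    obtain ⟨w, hw⟩ := hc.exists_walk_length_eq_dist a b
    cases w with
    | nil => simp at hw; omega
    | @cons _ a' _ hadj w' =>
      rw [SimpleGraph.Walk.length_cons] at hw
      have haa' : G.dist a a' = 1 := dist_adj hT hadj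
      have hd' : G.dist a' b = G.dist a b - 1 := by
        have h1 : G.dist a' b ≤ w'.length := SimpleGraph.dist_le w'
        have h2 : G.dist a b ≤ 1 + G.dist a' b := by
          have := hc.dist_triangle (u := a) (v := a') (w := b)
          omega
        omega
      have hdpq : G.dist p q = 1 := dist_adj hT h
      rcases adj_dist_cases hT h a' with hs | hs
      · -- a' on p-side
        have ha'2 : G.dist a' p < G.dist a' q := by omega
        have hrec := IH (n-1) (by omega) a' b (by omega) ha'2 hb
        have t1 : G.dist a p ≤ 1 + G.dist a' p := by
          have := hc.dist_triangle (u := a) (v := a') (w := p)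
          omega
        have t2 : G.dist a b ≤ G.dist a p + 1 + G.dist q b := by
          have u1 := hc.dist_triangle (u := a) (v := p) (w := b)
          have u2 := hc.dist_triangle (u := p) (v := q) (w := b)
          omega
        omega
      · -- a' on q-side : crossing edge
        have ha'2 : G.dist a' q < G.dist a' p := by omega
        obtain ⟨heq1, heq2⟩ := crossing hT h hadj ha ha'2
        have h0 : G.dist a p = 0 := by rw [heq1]; exact SimpleGraph.dist_self
        have hq : G.dist q b = G.dist a b - 1 := by rw [← heq2]; exact hd'
        omega

variable {N : ℕ} {leaf : Fin N ↪ V}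

/-- in the intersection of two sides there is always a labeled leaf -/
lemma exists_leaf_side (hP : IsPhylo G leaf) {u v u' v' : V} (huv : G.Adj u v)
    (hu'v' : G.Adj u' v') {x : V} (hx1 : G.dist x u < G.dist x v)
    (hx2 : G.dist x u' < G.dist x v') :
    ∃ i, G.dist (leaf i) u < G.dist (leaf i) v ∧ G.dist (leaf i) u' < G.dist (leaf i) v' := by
  classical
  have hT := hP.isTree
  have hc := hT.isConnected
  have _ := hP.finite
  set S : Set V := {y | G.dist y u < G.dist y v ∧ G.dist y u' < G.dist y v'} with hS
  obtain ⟨x₀, hx₀S, hx₀max⟩ := Set.exists_max_image S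
    (fun y => G.dist y v + G.dist y v') (Set.toFinite S) ⟨x, hx1, hx2⟩
  rcases hP.deg x₀ with hdeg | hdeg
  · obtain ⟨i, hi⟩ := (hP.leafIff x₀).mp hdeg
    exact ⟨i, by rw [hi]; exact hx₀S.1, by rw [hi]; exact hx₀S.2⟩
  · exfalso
    set bad1 : Set V := {y | y ∈ G.neighborSet x₀ ∧ G.dist y v + 1 = G.dist x₀ v} with hbad1
    set bad2 : Set V := {y | y ∈ G.neighborSet x₀ ∧ G.dist y v' + 1 = G.dist x₀ v'} with hbad2
    have hb1 : bad1.ncard ≤ 1 := by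
      rw [Set.ncard_le_one (Set.toFinite _)]
      rintro a ⟨ha1, ha2⟩ b ⟨hc1, hc2⟩
      exact unique_step hT ha1 hc1 ha2 hc2
    have hb2 : bad2.ncard ≤ 1 := by
      rw [Set.ncard_le_one (Set.toFinite _)]
      rintro a ⟨ha1, ha2⟩ b ⟨hc1, hc2⟩
      exact unique_step hT ha1 hc1 ha2 hc2
    have hex : ∃ y ∈ G.neighborSet x₀, y ∉ bad1 ∧ y ∉ bad2 := by
      by_contra hno
      push_neg at hno
      have hsub : G.neighborSet x₀ ⊆ bad1 ∪ bad2 := by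
        intro y hy
        rcases Classical.em (y ∈ bad1) with hm | hm
        · exact Or.inl hm
        · exact Or.inr (hno y hy hm)
      have c1 := Set.ncard_le_ncard hsub (Set.toFinite _)
      have c2 := Set.ncard_union_le bad1 bad2
      omega
    obtain ⟨y, hy, hy1, hy2⟩ := hex
    have hadj : G.Adj x₀ y := hy
    have hyv : G.dist y v = G.dist x₀ v + 1 := by
      rcases adj_dist_cases hT hadj v with hcase | hcase
      · rw [SimpleGraph.dist_comm (u := v) (v := x₀), SimpleGraph.dist_comm (u := v) (v := y)]
          at hcase
        omega
      · exfalso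
        exact hy1 ⟨hy, by
          rw [SimpleGraph.dist_comm (u := v) (v := x₀), SimpleGraph.dist_comm (u := v) (v := y)]
            at hcase
          omega⟩
    have hyv' : G.dist y v' = G.dist x₀ v' + 1 := by
      rcases adj_dist_cases hT hadj v' with hcase | hcase
      · rw [SimpleGraph.dist_comm (u := v') (v := x₀), SimpleGraph.dist_comm (u := v') (v := y)]
          at hcase
        omega
      · exfalso
        exact hy2 ⟨hy, by
          rw [SimpleGraph.dist_comm (u := v') (v := x₀), SimpleGraph.dist_comm (u := v') (v := y)]
            at hcase
          omega⟩
    have hySu : G.dist y u < G.dist y v := by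
      rcases adj_dist_cases hT huv y with hcase | hcase
      · omega
      · exfalso
        obtain ⟨heq1, heq2⟩ := crossing hT huv hadj hx₀S.1 (by omega)
        rw [heq2, SimpleGraph.dist_self] at hyv
        omega
    have hySu' : G.dist y u' < G.dist y v' := by
      rcases adj_dist_cases hT hu'v' y with hcase | hcase
      · omega
      · exfalso
        obtain ⟨heq1, heq2⟩ := crossing hT hu'v' hadj hx₀S.2 (by omega)
        rw [heq2, SimpleGraph.dist_self] at hyv'
        omega
    have := hx₀max y ⟨hySu, hySu'⟩
    omega

lemma splitAt_compl (hT : G.IsTree) {u v : V} (h : G.Adj u v) :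
    (splitAt G leaf u v)ᶜ = splitAt G leaf v u := by
  ext i
  have := adj_dist_cases hT h (leaf i)
  simp only [splitAt, Set.mem_compl_iff, Set.mem_setOf_eq, not_lt]
  omega

lemma side_mono (hP : IsPhylo G leaf) {a b c d : V} (h1 : G.Adj a b) (h2 : G.Adj c d)
    (hsub : splitAt G leaf a b ⊆ splitAt G leaf c d) {x : V}
    (hx : G.dist x a < G.dist x b) : G.dist x c < G.dist x d := by
  by_contra hnot
  have hx2 : G.dist x d < G.dist x c := by
    have := adj_dist_cases hP.isTree h2 x
    omega
  obtain ⟨i, hi1, hi2⟩ := exists_leaf_side hP h1 h2.symm hx hx2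
  have := hsub hi1
  simp only [splitAt, Set.mem_setOf_eq] at this
  omega

lemma splitAt_inj (hP : IsPhylo G leaf) {a b c d : V} (h1 : G.Adj a b) (h2 : G.Adj c d)
    (heq : splitAt G leaf a b = splitAt G leaf c d) : a = c ∧ b = d := by
  have hT := hP.isTree
  have hcmpl : splitAt G leaf b a = splitAt G leaf d c := by
    rw [← splitAt_compl hT h1, ← splitAt_compl hT h2, heq]
  have hcx : G.dist c a < G.dist c b := by
    refine side_mono hP h2 h1 (le_of_eq heq.symm) ?_
    rw [SimpleGraph.dist_self]
    exact hT.isConnected.pos_dist_of_ne (G.ne_of_adj h2)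
  have hdx : G.dist d b < G.dist d a := by
    refine side_mono hP h2.symm h1.symm (le_of_eq hcmpl.symm) ?_
    rw [SimpleGraph.dist_self]
    exact hT.isConnected.pos_dist_of_ne (G.ne_of_adj h2.symm)
  obtain ⟨e1, e2⟩ := crossing hP.isTree h1 h2 hcx hdx
  exact ⟨e1.symm, e2.symm⟩


/-- all oriented splits of the tree -/
def OSplits (G : SimpleGraph V) (leaf : Fin N ↪ V) : Set (Set (Fin N)) :=
  {A | ∃ u v, G.Adj u v ∧ A = splitAt G leaf u v}

/-- `C` separates `B₁` from `B₂` strictly -/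
def Between (S : Set (Set (Fin N))) (B₁ B₂ : Set (Fin N)) : Prop :=
  ∃ C ∈ S, B₁ ⊆ C ∧ B₂ ∩ C = ∅ ∧ C ≠ B₁ ∧ B₂ ∪ C ≠ Set.univ

/-- split-system criterion for two directed edges to have the same tail -/
def SameTail (S : Set (Set (Fin N))) (B₁ B₂ : Set (Fin N)) : Prop :=
  B₁ = B₂ ∨ (B₁ ∩ B₂ = ∅ ∧ B₁ ∪ B₂ ≠ Set.univ ∧ ¬ Between S B₁ B₂)

lemma sameTail_of_eq (hP : IsPhylo G leaf) {t h₁ h₂ : V} (e₁ : G.Adj t h₁) (e₂ : G.Adj t h₂) :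
    SameTail (OSplits G leaf) (splitAt G leaf h₁ t) (splitAt G leaf h₂ t) := by
  have hT := hP.isTree
  have hc := hT.isConnected
  by_cases hh : h₁ = h₂
  · subst hh; exact Or.inl rfl
  · refine Or.inr ⟨?_, ?_, ?_⟩
    · -- disjoint
      ext i
      simp only [splitAt, Set.mem_inter_iff, Set.mem_setOf_eq, Set.mem_empty_iff_false,
        iff_false, not_and, not_lt]
      intro hi1
      by_contra hcon
      push_neg at hcon
      have d1 : G.dist (leaf i) h₁ + 1 = G.dist (leaf i) t := by
        rcases adj_dist_cases hT e₁ (leaf i) with hcase | hcase <;> omega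
      have d2 : G.dist (leaf i) h₂ + 1 = G.dist (leaf i) t := by
        rcases adj_dist_cases hT e₂ (leaf i) with hcase | hcase <;> omega
      refine hh (unique_step (v := leaf i) hT e₁ e₂ ?_ ?_)
      · rw [SimpleGraph.dist_comm (u := h₁), SimpleGraph.dist_comm (u := t)]; exact d1
      · rw [SimpleGraph.dist_comm (u := h₂), SimpleGraph.dist_comm (u := t)]; exact d2
    · -- union not everything
      intro hU
      obtain ⟨i, hi1, hi2⟩ := exists_leaf_side hP (x := t) e₁ e₂
        (by rw [SimpleGraph.dist_self]; exact hc.pos_dist_of_ne (G.ne_of_adj e₁))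
        (by rw [SimpleGraph.dist_self]; exact hc.pos_dist_of_ne (G.ne_of_adj e₂))
      have hmem : i ∈ splitAt G leaf h₁ t ∪ splitAt G leaf h₂ t := by
        rw [hU]; exact Set.mem_univ i
      rcases hmem with hm | hm <;>
        · simp only [splitAt, Set.mem_setOf_eq] at hm
          omega
    · -- no between
      rintro ⟨C, ⟨a, b, hab, rfl⟩, hsub, hdisj, hneC, huniv⟩
      have hS1 : ∀ x, G.dist x h₁ < G.dist x t → G.dist x a < G.dist x b :=
        fun x hx => side_mono hP e₁.symm hab hsub hx
      have hsub2 : splitAt G leaf h₂ t ⊆ splitAt G leaf b a := by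
        intro i hi
        rw [← splitAt_compl hT hab]
        intro hmem
        have : i ∈ splitAt G leaf h₂ t ∩ splitAt G leaf a b := ⟨hi, hmem⟩
        rw [hdisj] at this
        exact this
      have hS2 : ∀ x, G.dist x h₂ < G.dist x t → G.dist x b < G.dist x a :=
        fun x hx => side_mono hP e₂.symm hab.symm hsub2 hx
      have hh₁a : G.dist h₁ a < G.dist h₁ b := by
        refine hS1 h₁ ?_
        rw [SimpleGraph.dist_self]; exact hc.pos_dist_of_ne e₁.ne'
      have hh₂b : G.dist h₂ b < G.dist h₂ a := by
        refine hS2 h₂ ?_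
        rw [SimpleGraph.dist_self]; exact hc.pos_dist_of_ne e₂.ne'
      rcases adj_dist_cases hT hab t with hcase | hcase
      · -- t on a-side : use edge (t,h₂)
        obtain ⟨he1, he2⟩ := crossing hT hab e₂ (by omega) hh₂b
        apply huniv
        have : splitAt G leaf a b = splitAt G leaf t h₂ := by rw [he1, he2]
        rw [this, ← splitAt_compl hT e₂]
        exact Set.compl_union_self _
      · -- t on b-side : use edge (h₁,t)
        obtain ⟨he1, he2⟩ := crossing hT hab e₁.symm hh₁a (by omega)
        apply hneC
        rw [he1, he2]

lemma tail_eq_of_sameTail (hP : IsPhylo G leaf) {t₁ h₁ t₂ h₂ : V}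
    (e₁ : G.Adj t₁ h₁) (e₂ : G.Adj t₂ h₂)
    (hst : SameTail (OSplits G leaf) (splitAt G leaf h₁ t₁) (splitAt G leaf h₂ t₂)) :
    t₁ = t₂ := by
  have hT := hP.isTree
  have hc := hT.isConnected
  rcases hst with heq | ⟨hdisj, huniv, hnb⟩
  · exact (splitAt_inj hP e₁.symm e₂.symm heq).2
  · by_contra hne
    -- positions of h₂, t₂ relative to the edge (t₁,h₁)
    have hh₂ : G.dist h₂ t₁ < G.dist h₂ h₁ := by
      by_contra hcon
      have hx1 : G.dist h₂ h₁ < G.dist h₂ t₁ := by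
        rcases adj_dist_cases hT e₁ h₂ with hcase | hcase <;> omega
      obtain ⟨i, hi1, hi2⟩ := exists_leaf_side hP (x := h₂) e₁.symm e₂.symm hx1
        (by rw [SimpleGraph.dist_self]; exact hc.pos_dist_of_ne (G.ne_of_adj e₂.symm))
      have : i ∈ splitAt G leaf h₁ t₁ ∩ splitAt G leaf h₂ t₂ := ⟨hi1, hi2⟩
      rw [hdisj] at this
      exact this
    have ht₂ : G.dist t₂ t₁ < G.dist t₂ h₁ := by
      by_contra hcon
      have hx1 : G.dist t₂ h₁ < G.dist t₂ t₁ := by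
        rcases adj_dist_cases hT e₁ t₂ with hcase | hcase <;> omega
      obtain ⟨he1, he2⟩ := crossing hT e₁.symm e₂ hx1 hh₂
      apply huniv
      have : splitAt G leaf h₂ t₂ = splitAt G leaf t₁ h₁ := by rw [he1, he2]
      rw [this, ← splitAt_compl hT e₁]
      rw [Set.union_comm]
      exact Set.union_compl_self _
    have hh₁ : G.dist h₁ t₂ < G.dist h₁ h₂ := by
      by_contra hcon
      have hx1 : G.dist h₁ h₂ < G.dist h₁ t₂ := by
        rcases adj_dist_cases hT e₂ h₁ with hcase | hcase <;> omega
      obtain ⟨i, hi1, hi2⟩ := exists_leaf_side hP (x := h₁) e₂.symm e₁.symm hx1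
        (by rw [SimpleGraph.dist_self]; exact hc.pos_dist_of_ne (G.ne_of_adj e₁.symm))
      have : i ∈ splitAt G leaf h₁ t₁ ∩ splitAt G leaf h₂ t₂ := ⟨hi2, hi1⟩
      rw [hdisj] at this
      exact this
    have ht₁ : G.dist t₁ t₂ < G.dist t₁ h₂ := by
      by_contra hcon
      have hx1 : G.dist t₁ h₂ < G.dist t₁ t₂ := by
        rcases adj_dist_cases hT e₂ t₁ with hcase | hcase <;> omega
      obtain ⟨he1, he2⟩ := crossing hT e₂.symm e₁ hx1 hh₁
      apply huniv
      have : splitAt G leaf h₂ t₂ = splitAt G leaf t₁ h₁ := by rw [← he1, ← he2]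
      rw [this, ← splitAt_compl hT e₁]
      rw [Set.union_comm]
      exact Set.union_compl_self _
    -- first step z on the path from t₁ to t₂
    have hdpos : 0 < G.dist t₁ t₂ := hc.pos_dist_of_ne hne
    obtain ⟨w, hw⟩ := hc.exists_walk_length_eq_dist t₁ t₂
    cases w with
    | nil => exact hne rfl
    | @cons _ z _ hadjz w' =>
      rw [SimpleGraph.Walk.length_cons] at hw
      have hzt₂ : G.dist z t₂ = G.dist t₁ t₂ - 1 := by
        have h1 : G.dist z t₂ ≤ w'.length := SimpleGraph.dist_le w'
        have h2 : G.dist t₁ t₂ ≤ 1 + G.dist z t₂ := by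
          have := hc.dist_triangle (u := t₁) (v := z) (w := t₂)
          have : G.dist t₁ z = 1 := dist_adj hT hadjz
          omega
        omega
      have hzne : z ≠ h₁ := by
        intro hzeq
        subst hzeq
        have c1 : G.dist t₂ z = G.dist z t₂ := SimpleGraph.dist_comm
        have c2 : G.dist t₂ t₁ = G.dist t₁ t₂ := SimpleGraph.dist_comm
        omega
      -- side(h₁,t₁) ⊆ side(t₁,z)
      have hS6 : ∀ x, G.dist x h₁ < G.dist x t₁ → G.dist x t₁ < G.dist x z := by
        intro x hx
        by_contra hxz
        have d2 : G.dist x z + 1 = G.dist x t₁ := by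
          rcases adj_dist_cases hT hadjz x with hcase | hcase <;> omega
        have d1 : G.dist x h₁ + 1 = G.dist x t₁ := by
          rcases adj_dist_cases hT e₁ x with hcase | hcase <;> omega
        refine hzne (unique_step (v := x) hT hadjz e₁ ?_ ?_)
        · rw [SimpleGraph.dist_comm (u := z), SimpleGraph.dist_comm (u := t₁)]; exact d2
        · rw [SimpleGraph.dist_comm (u := h₁), SimpleGraph.dist_comm (u := t₁)]; exact d1
      -- side(h₂,t₂) ⊆ side(z,t₁)
      have hS7 : ∀ x, G.dist x h₂ < G.dist x t₂ → G.dist x z < G.dist x t₁ := by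
        intro x hx
        have hcross := dist_cross hT e₂.symm (G.dist x t₁) x t₁ rfl hx ht₁
        have hxt₂ : G.dist x t₂ = G.dist x h₂ + 1 := by
          rcases adj_dist_cases hT e₂ x with hcase | hcase <;> omega
        have htri : G.dist x z ≤ G.dist x t₂ + G.dist t₂ z := hc.dist_triangle
        have c1 : G.dist t₂ z = G.dist z t₂ := SimpleGraph.dist_comm
        have c2 : G.dist t₂ t₁ = G.dist t₁ t₂ := SimpleGraph.dist_comm
        omega
      -- build the between witness
      apply hnb
      refine ⟨splitAt G leaf t₁ z, ⟨t₁, z, hadjz, rfl⟩, ?_, ?_, ?_, ?_⟩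
      · intro i hi
        exact hS6 (leaf i) hi
      · ext i
        simp only [splitAt, Set.mem_inter_iff, Set.mem_setOf_eq, Set.mem_empty_iff_false,
          iff_false, not_and, not_lt]
        intro hi
        exact le_of_lt (hS7 (leaf i) hi)
      · intro hCeq
        have := (splitAt_inj hP hadjz e₁.symm hCeq).1
        exact (G.ne_of_adj e₁) this
      · intro hU
        obtain ⟨i, hi1, hi2⟩ := exists_leaf_side hP (x := t₂) e₂ hadjz.symm
          (by rw [SimpleGraph.dist_self]; exact hc.pos_dist_of_ne (G.ne_of_adj e₂))
          (by
            have c1 : G.dist t₂ z = G.dist z t₂ := SimpleGraph.dist_comm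
            have c2 : G.dist t₂ t₁ = G.dist t₁ t₂ := SimpleGraph.dist_comm
            omega)
        have hmem : i ∈ splitAt G leaf h₂ t₂ ∪ splitAt G leaf t₁ z := by
          rw [hU]; exact Set.mem_univ i
        rcases hmem with hm | hm <;>
          · simp only [splitAt, Set.mem_setOf_eq] at hm
            omega


lemma exists_nbr (hP : IsPhylo G leaf) (u : V) : ∃ v, G.Adj u v := by
  have h : (G.neighborSet u).ncard ≠ 0 := by rcases hP.deg u with h | h <;> omega
  obtain ⟨v, hv⟩ := Set.nonempty_of_ncard_ne_zero h
  exact ⟨v, hv⟩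

/-- the split at a leaf consists of everything except that leaf -/
lemma leaf_split (hP : IsPhylo G leaf) (i : Fin N) {m : V} (hm : G.Adj (leaf i) m) :
    splitAt G leaf m (leaf i) = {i}ᶜ := by
  have hT := hP.isTree
  have hc := hT.isConnected
  have hdeg : (G.neighborSet (leaf i)).ncard = 1 := (hP.leafIff (leaf i)).mpr ⟨i, rfl⟩
  have hnbr : G.neighborSet (leaf i) = {m} := by
    obtain ⟨a, ha⟩ := Set.ncard_eq_one.mp hdeg
    have : m ∈ G.neighborSet (leaf i) := hm
    rw [ha] at this ⊢
    rw [Set.mem_singleton_iff] at this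
    rw [this]
  -- every vertex other than `leaf i` is closer to m
  have key : ∀ x : V, x ≠ leaf i → G.dist x m < G.dist x (leaf i) := by
    intro x hx
    have hpos : 0 < G.dist (leaf i) x := hc.pos_dist_of_ne (Ne.symm hx)
    obtain ⟨w, hw⟩ := hc.exists_walk_length_eq_dist (leaf i) x
    cases w with
    | nil => exact absurd rfl (Ne.symm hx)
    | @cons _ y _ hadjy w' =>
      have hym : y = m := by
        have : y ∈ G.neighborSet (leaf i) := hadjy
        rw [hnbr, Set.mem_singleton_iff] at this
        exact this
      rw [SimpleGraph.Walk.length_cons] at hw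
      have h1 : G.dist m x ≤ w'.length := by rw [← hym]; exact SimpleGraph.dist_le w'
      have c1 : G.dist x m = G.dist m x := SimpleGraph.dist_comm
      have c2 : G.dist x (leaf i) = G.dist (leaf i) x := SimpleGraph.dist_comm
      omega
  ext j
  simp only [splitAt, Set.mem_setOf_eq, Set.mem_compl_iff, Set.mem_singleton_iff]
  constructor
  · intro hj hji
    subst hji
    rw [SimpleGraph.dist_self] at hj
    omega
  · intro hji
    exact key (leaf j) (fun hcon => hji (leaf.injective hcon))

end RFAux

namespace RFAux

variable {V₁ V₂ : Type} {N : ℕ} {G₁ : SimpleGraph V₁} {G₂ : SimpleGraph V₂}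
  {leaf₁ : Fin N ↪ V₁} {leaf₂ : Fin N ↪ V₂}

/-- The reconstruction map from the split system. -/
lemma exists_map (h₁ : IsPhylo G₁ leaf₁) (h₂ : IsPhylo G₂ leaf₂)
    (hOS : OSplits G₁ leaf₁ = OSplits G₂ leaf₂) :
    ∃ φ : V₁ → V₂,
      (∀ u v, G₁.Adj u v →
        G₂.Adj (φ u) (φ v) ∧ splitAt G₁ leaf₁ v u = splitAt G₂ leaf₂ (φ v) (φ u)) ∧
      (∀ i, φ (leaf₁ i) = leaf₂ i) ∧
      (∀ (u v : V₁) (p q : V₂), G₁.Adj u v → G₂.Adj p q →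
        splitAt G₁ leaf₁ v u = splitAt G₂ leaf₂ p q → q = φ u) := by
  classical
  -- choose a neighbour of each vertex
  choose n hn using exists_nbr h₁
  -- realize each basic split in G₂
  have hreal : ∀ u : V₁, ∃ pq : V₂ × V₂,
      G₂.Adj pq.1 pq.2 ∧ splitAt G₁ leaf₁ (n u) u = splitAt G₂ leaf₂ pq.1 pq.2 := by
    intro u
    have hmem : splitAt G₁ leaf₁ (n u) u ∈ OSplits G₁ leaf₁ := ⟨n u, u, (hn u).symm, rfl⟩
    rw [hOS] at hmem
    obtain ⟨p, q, hpq, heq⟩ := hmem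
    exact ⟨(p, q), hpq, heq⟩
  choose pq hpq hpqeq using hreal
  set φ : V₁ → V₂ := fun u => (pq u).2 with hφ
  -- central uniqueness property
  have central : ∀ (u v : V₁) (p q : V₂), G₁.Adj u v → G₂.Adj p q →
      splitAt G₁ leaf₁ v u = splitAt G₂ leaf₂ p q → q = φ u := by
    intro u v p q huv hpq2 heq
    have hst : SameTail (OSplits G₁ leaf₁) (splitAt G₁ leaf₁ v u)
        (splitAt G₁ leaf₁ (n u) u) := sameTail_of_eq h₁ huv (hn u)
    rw [heq, hpqeq u, hOS] at hst
    exact tail_eq_of_sameTail h₂ hpq2.symm (hpq u).symm hst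
  refine ⟨φ, ?_, ?_, central⟩
  · -- adjacency and splits are preserved
    intro u v huv
    have hmem : splitAt G₁ leaf₁ v u ∈ OSplits G₁ leaf₁ := ⟨v, u, huv.symm, rfl⟩
    rw [hOS] at hmem
    obtain ⟨p, q, hpq2, heq⟩ := hmem
    have hq : q = φ u := central u v p q huv hpq2 heq
    have hcmpl : splitAt G₁ leaf₁ u v = splitAt G₂ leaf₂ q p := by
      rw [← splitAt_compl h₁.isTree huv.symm, ← splitAt_compl h₂.isTree hpq2, heq]
    have hp : p = φ v := central v u q p huv.symm hpq2.symm hcmpl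
    subst hq hp
    exact ⟨hpq2.symm, heq⟩
  · -- leaves are preserved
    intro i
    obtain ⟨m, hm⟩ := exists_nbr h₂ (leaf₂ i)
    have k1 : splitAt G₁ leaf₁ (n (leaf₁ i)) (leaf₁ i) = ({i}ᶜ : Set (Fin N)) :=
      leaf_split h₁ i (hn (leaf₁ i))
    have k2 : splitAt G₂ leaf₂ m (leaf₂ i) = ({i}ᶜ : Set (Fin N)) := leaf_split h₂ i hm
    have := hpqeq (leaf₁ i)
    rw [k1, ← k2] at this
    show (pq (leaf₁ i)).2 = leaf₂ i
    exact ((splitAt_inj h₂ (hpq (leaf₁ i)) (hm.symm) this.symm).2)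

/-- equal oriented split systems give a labeled isomorphism -/
lemma labeledIso_of_OS (h₁ : IsPhylo G₁ leaf₁) (h₂ : IsPhylo G₂ leaf₂)
    (hOS : OSplits G₁ leaf₁ = OSplits G₂ leaf₂) : LabeledIso G₁ leaf₁ G₂ leaf₂ := by
  obtain ⟨φ, hφadj, hφleaf, hφc⟩ := exists_map h₁ h₂ hOS
  obtain ⟨ψ, hψadj, hψleaf, hψc⟩ := exists_map h₂ h₁ hOS.symm
  have hlinv : ∀ u, ψ (φ u) = u := by
    intro u
    obtain ⟨v, hv⟩ := exists_nbr h₁ u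
    obtain ⟨hadj2, hsp⟩ := hφadj u v hv
    exact (hψc (φ u) (φ v) v u hadj2 hv.symm hsp.symm).symm
  have hrinv : ∀ p, φ (ψ p) = p := by
    intro p
    obtain ⟨q, hq⟩ := exists_nbr h₂ p
    obtain ⟨hadj1, hsp⟩ := hψadj p q hq
    exact (hφc (ψ p) (ψ q) q p hadj1 hq.symm hsp.symm).symm
  refine ⟨⟨φ, ψ, hlinv, hrinv⟩, ?_, ?_⟩
  · intro a b
    simp only [Equiv.coe_fn_mk]
    constructor
    · intro h
      exact (hφadj a b h).1
    · intro h
      have := (hψadj _ _ h).1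
      rwa [hlinv, hlinv] at this
  · intro i
    simp only [Equiv.coe_fn_mk]
    exact hφleaf i

/-- graph isomorphisms preserve distances -/
lemma dist_map (hc₁ : G₁.Connected) (φ : V₁ ≃ V₂)
    (hadj : ∀ a b : V₁, G₁.Adj a b ↔ G₂.Adj (φ a) (φ b)) (a b : V₁) :
    G₂.dist (φ a) (φ b) = G₁.dist a b := by
  have hc₂ : G₂.Connected := by
    have hsurj : Function.Surjective φ := φ.surjective
    haveI : Nonempty V₂ := Nonempty.map φ hc₁.nonempty
    constructor
    intro x y
    obtain ⟨a, rfl⟩ := hsurj x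
    obtain ⟨b, rfl⟩ := hsurj y
    obtain ⟨w, _⟩ := hc₁.exists_walk_length_eq_dist a b
    exact Walk.reachable (w.map ⟨φ, fun h => (hadj _ _).mp h⟩)
  refine le_antisymm ?_ ?_
  · obtain ⟨w, hw⟩ := hc₁.exists_walk_length_eq_dist a b
    have := SimpleGraph.dist_le (w.map ⟨φ, fun h => (hadj _ _).mp h⟩)
    rwa [SimpleGraph.Walk.length_map, hw] at this
  · obtain ⟨w, hw⟩ := hc₂.exists_walk_length_eq_dist (φ a) (φ b)
    have hadj' : ∀ a b : V₂, G₂.Adj a b → G₁.Adj (φ.symm a) (φ.symm b) := by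
      intro x y h
      have := (hadj (φ.symm x) (φ.symm y)).mpr
      simp only [Equiv.apply_symm_apply] at this
      exact this h
    have := SimpleGraph.dist_le ((w.map ⟨φ.symm, fun h => hadj' _ _ h⟩).copy
      (φ.symm_apply_apply a) (φ.symm_apply_apply b))
    rwa [SimpleGraph.Walk.length_copy, SimpleGraph.Walk.length_map, hw] at this


lemma labeledIso_symm (h : LabeledIso G₁ leaf₁ G₂ leaf₂) : LabeledIso G₂ leaf₂ G₁ leaf₁ := by
  obtain ⟨φ, hadj, hleaf⟩ := h
  refine ⟨φ.symm, fun a b => ?_, fun i => ?_⟩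
  · have := hadj (φ.symm a) (φ.symm b)
    simpa using this.symm
  · rw [← hleaf i, Equiv.symm_apply_apply]

lemma rfSplits_subset_of_iso (h0 : 0 < N) (h₁ : IsPhylo G₁ leaf₁) (h₂ : IsPhylo G₂ leaf₂)
    (hiso : LabeledIso G₁ leaf₁ G₂ leaf₂) :
    rfSplits h0 G₁ leaf₁ ⊆ rfSplits h0 G₂ leaf₂ := by
  obtain ⟨φ, hadj, hleaf⟩ := hiso
  rintro A ⟨⟨u, v, hab, rfl⟩, h0m⟩
  refine ⟨⟨φ u, φ v, (hadj u v).mp hab, ?_⟩, h0m⟩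
  ext i
  simp only [splitAt, Set.mem_setOf_eq]
  rw [← hleaf i, dist_map h₁.isTree.isConnected φ hadj,
    dist_map h₁.isTree.isConnected φ hadj]

lemma mem_OSplits_iff (h0 : 0 < N) {G : SimpleGraph V₁} {leaf : Fin N ↪ V₁}
    (hP : IsPhylo G leaf) (A : Set (Fin N)) :
    A ∈ OSplits G leaf ↔ A ∈ rfSplits h0 G leaf ∨ Aᶜ ∈ rfSplits h0 G leaf := by
  constructor
  · rintro ⟨u, v, hab, rfl⟩
    by_cases h0m : (⟨0, h0⟩ : Fin N) ∈ splitAt G leaf u v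
    · right
      refine ⟨⟨v, u, hab.symm, splitAt_compl hP.isTree hab⟩, ?_⟩
      simp only [Set.mem_compl_iff, not_not]
      exact h0m
    · left
      exact ⟨⟨u, v, hab, rfl⟩, h0m⟩
  · rintro (⟨⟨u, v, hab, rfl⟩, h0m⟩ | ⟨⟨u, v, hab, heq⟩, h0m⟩)
    · exact ⟨u, v, hab, rfl⟩
    · have : A = splitAt G leaf v u := by
        rw [← splitAt_compl hP.isTree hab, ← heq, compl_compl]
      exact ⟨v, u, hab.symm, this⟩

lemma OSplits_eq_of_rf (h0 : 0 < N) (h₁ : IsPhylo G₁ leaf₁) (h₂ : IsPhylo G₂ leaf₂)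
    (hrf : rfSplits h0 G₁ leaf₁ = rfSplits h0 G₂ leaf₂) :
    OSplits G₁ leaf₁ = OSplits G₂ leaf₂ := by
  ext A
  rw [mem_OSplits_iff h0 h₁, mem_OSplits_iff h0 h₂, hrf]

end RFAux

open RFAux in
/-- The Robinson–Foulds distance `D_RF(τ₁,τ₂) = |P(τ₁) Δ P(τ₂)|` defines a metric on the set
of unrooted bifurcating tree topologies with a fixed leaf set: it vanishes exactly on pairs
of equal (leaf-label-isomorphic) trees, is symmetric, and satisfies the triangle
inequality.  In particular `D_RF(τ₁,τ₂) = 0` implies `τ₁ = τ₂` as leaf-labeled trees. -/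
theorem rf_distance_is_metric (N : ℕ) (hN : 3 ≤ N) (h0 : 0 < N)
    {V₁ V₂ V₃ : Type}
    (G₁ : SimpleGraph V₁) (leaf₁ : Fin N ↪ V₁) (h₁ : IsPhylo G₁ leaf₁)
    (G₂ : SimpleGraph V₂) (leaf₂ : Fin N ↪ V₂) (h₂ : IsPhylo G₂ leaf₂)
    (G₃ : SimpleGraph V₃) (leaf₃ : Fin N ↪ V₃) (h₃ : IsPhylo G₃ leaf₃) :
    (rfDist h0 G₁ leaf₁ G₂ leaf₂ = 0 ↔ LabeledIso G₁ leaf₁ G₂ leaf₂) ∧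
    rfDist h0 G₁ leaf₁ G₂ leaf₂ = rfDist h0 G₂ leaf₂ G₁ leaf₁ ∧
    rfDist h0 G₁ leaf₁ G₃ leaf₃ ≤
      rfDist h0 G₁ leaf₁ G₂ leaf₂ + rfDist h0 G₂ leaf₂ G₃ leaf₃ := by
  classical
  refine ⟨⟨?_, ?_⟩, ?_, ?_⟩
  · -- distance zero → isomorphic
    intro hz
    rw [rfDist] at hz
    have hempty : symmDiff (rfSplits h0 G₁ leaf₁) (rfSplits h0 G₂ leaf₂) = ∅ :=
      (Set.ncard_eq_zero (Set.toFinite _)).mp hz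
    rw [← Set.bot_eq_empty] at hempty
    have heq : rfSplits h0 G₁ leaf₁ = rfSplits h0 G₂ leaf₂ := symmDiff_eq_bot.mp hempty
    exact labeledIso_of_OS h₁ h₂ (OSplits_eq_of_rf h0 h₁ h₂ heq)
  · -- isomorphic → distance zero
    intro hiso
    have heq : rfSplits h0 G₁ leaf₁ = rfSplits h0 G₂ leaf₂ :=
      Set.Subset.antisymm (rfSplits_subset_of_iso h0 h₁ h₂ hiso)
        (rfSplits_subset_of_iso h0 h₂ h₁ (labeledIso_symm hiso))
    rw [rfDist, heq, symmDiff_self, Set.bot_eq_empty, Set.ncard_empty]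
  · -- symmetry
    rw [rfDist, rfDist, symmDiff_comm]
  · -- triangle inequality
    have hsub : symmDiff (rfSplits h0 G₁ leaf₁) (rfSplits h0 G₃ leaf₃) ⊆
        symmDiff (rfSplits h0 G₁ leaf₁) (rfSplits h0 G₂ leaf₂) ∪
        symmDiff (rfSplits h0 G₂ leaf₂) (rfSplits h0 G₃ leaf₃) := symmDiff_triangle _ _ _
    calc (symmDiff (rfSplits h0 G₁ leaf₁) (rfSplits h0 G₃ leaf₃)).ncard
        ≤ (symmDiff (rfSplits h0 G₁ leaf₁) (rfSplits h0 G₂ leaf₂) ∪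
           symmDiff (rfSplits h0 G₂ leaf₂) (rfSplits h0 G₃ leaf₃)).ncard :=
          Set.ncard_le_ncard hsub (Set.toFinite _)
      _ ≤ _ := Set.ncard_union_le _ _
end

section
/- The path-difference distance D_PD(τ₁,τ₂) = Σ_{i<j} |l_{x_i x_j}(τ₁) − l_{x_i x_j}(τ₂)|, where l_{x_i x_j}(τ) is the number of edges on the path between leaves x_i and x_j in τ, is a metric on unrooted bifurcating tree topologies with a fixed leaf set of size N ≥ 3; in particular the vector of pairwise leaf path lengths determines the tree. -/
open SimpleGraph

/-- The path-difference distance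
`D_PD(τ₁,τ₂) = Σ_{i<j} |l_{xᵢxⱼ}(τ₁) − l_{xᵢxⱼ}(τ₂)|`, where `l_{xᵢxⱼ}(τ)` is the number of
edges on the path between leaves `xᵢ` and `xⱼ` in `τ`. -/
noncomputable def pdDist {V₁ V₂ : Type} {N : ℕ}
    (G₁ : SimpleGraph V₁) (leaf₁ : Fin N ↪ V₁)
    (G₂ : SimpleGraph V₂) (leaf₂ : Fin N ↪ V₂) : ℕ :=
  ∑ p ∈ Finset.univ.filter (fun p : Fin N × Fin N => p.1 < p.2),
    ((G₁.dist (leaf₁ p.1) (leaf₁ p.2) : ℤ) - (G₂.dist (leaf₂ p.1) (leaf₂ p.2) : ℤ)).natAbs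


namespace PDAux

section Tree
variable {V : Type} {G : SimpleGraph V}

lemma path_length_eq_dist (hT : G.IsTree) {u v : V} {p : G.Walk u v} (hp : p.IsPath) :
    p.length = G.dist u v := by
  obtain ⟨q, hq, hql⟩ := hT.isConnected.exists_path_of_dist u v
  have := (hT.existsUnique_path u v).unique hp hq
  rw [this, hql]

lemma eq_of_dist_eq_zero (hT : G.IsTree) {u v : V} (h : G.dist u v = 0) : u = v := by
  by_contra hne
  exact (dist_ne_zero_iff_ne_and_reachable.mpr ⟨hne, hT.isConnected.preconnected u v⟩) h

lemma mem_support_between (hT : G.IsTree) {x y v : V} {p : G.Walk x y} (hp : p.IsPath)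
    (hv : v ∈ p.support) : G.dist x v + G.dist v y = G.dist x y := by
  classical
  have h1 := path_length_eq_dist hT (hp.takeUntil hv)
  have h2 := path_length_eq_dist hT (hp.dropUntil hv)
  have h3 := path_length_eq_dist hT hp
  have h4 := congrArg Walk.length (p.take_spec hv)
  rw [Walk.length_append] at h4
  omega

lemma between_mem_support (hT : G.IsTree) {x y v : V}
    (h : G.dist x v + G.dist v y = G.dist x y) {p : G.Walk x y} (hp : p.IsPath) :
    v ∈ p.support := by
  obtain ⟨q, hq, hql⟩ := hT.isConnected.exists_path_of_dist x v
  obtain ⟨r, hr, hrl⟩ := hT.isConnected.exists_path_of_dist v y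
  have hlen : (q.append r).length = G.dist x y := by rw [Walk.length_append]; omega
  have hpath := (q.append r).isPath_of_length_eq_dist hlen
  have := (hT.existsUnique_path x y).unique hpath hp
  rw [← this]
  exact (Walk.mem_support_append_iff _ _).mpr (Or.inl q.end_mem_support)

lemma isPath_append {u v w : V} {p : G.Walk u v} {q : G.Walk v w} (hp : p.IsPath)
    (hq : q.IsPath) (h : ∀ a, a ∈ p.support → a ∈ q.support → a = v) :
    (p.append q).IsPath := by
  rw [Walk.isPath_def, Walk.support_append, List.nodup_append]
  refine ⟨hp.support_nodup, hq.support_nodup.tail, ?_⟩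
  intro a ha b ha' hab
  rw [← hab] at ha'
  have hmem : a ∈ q.support := List.mem_of_mem_tail ha'
  have hav : a = v := h a ha hmem
  subst hav
  have := hq.support_nodup
  rw [q.support_eq_cons] at this
  exact (List.nodup_cons.mp this).1 ha'

lemma collinear (hT : G.IsTree) {x y v m : V}
    (hv : G.dist x v + G.dist v y = G.dist x y)
    (hm : G.dist x m + G.dist m y = G.dist x y) :
    G.dist x m + G.dist m v = G.dist x v ∨ G.dist x v + G.dist v m = G.dist x m := by
  obtain ⟨p, hp, hpl⟩ := hT.isConnected.exists_path_of_dist x v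
  by_cases h : m ∈ p.support
  · left; exact mem_support_between hT hp h
  · right
    obtain ⟨q, hq, hql⟩ := hT.isConnected.exists_path_of_dist v y
    have hlen : (p.append q).length = G.dist x y := by rw [Walk.length_append]; omega
    have hpath := (p.append q).isPath_of_length_eq_dist hlen
    have hm' : m ∈ (p.append q).support := between_mem_support hT hm hpath
    rw [Walk.mem_support_append_iff] at hm'
    have hmq : m ∈ q.support := hm'.resolve_left h
    have := mem_support_between hT hq hmq
    omega

lemma median (hT : G.IsTree) (x y z : V) :
    ∃ m, G.dist x m + G.dist m y = G.dist x y ∧ G.dist x m + G.dist m z = G.dist x z ∧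
      G.dist y m + G.dist m z = G.dist y z := by
  classical
  obtain ⟨p, hp, hpl⟩ := hT.isConnected.exists_path_of_dist x y
  obtain ⟨q, hq, hql⟩ := hT.isConnected.exists_path_of_dist x z
  -- choose common vertex maximizing dist x ·
  have hne : (p.support.toFinset ∩ q.support.toFinset).Nonempty :=
    ⟨x, by simp [Walk.start_mem_support]⟩
  obtain ⟨m, hmS, hmax⟩ := Finset.exists_max_image _ (fun w => G.dist x w) hne
  simp only [Finset.mem_inter, List.mem_toFinset] at hmS
  obtain ⟨hmp, hmq⟩ := hmS
  have e1 := mem_support_between hT hp hmp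
  have e2 := mem_support_between hT hq hmq
  refine ⟨m, e1, e2, ?_⟩
  -- path y → m → z
  have hr1 : ((p.dropUntil m hmp).reverse).IsPath := (hp.dropUntil hmp).reverse
  have hr2 : (q.dropUntil m hmq).IsPath := hq.dropUntil hmq
  have hdisj : ∀ a, a ∈ ((p.dropUntil m hmp).reverse).support →
      a ∈ (q.dropUntil m hmq).support → a = m := by
    intro a ha1 ha2
    rw [Walk.support_reverse, List.mem_reverse] at ha1
    have hap : a ∈ p.support := Walk.support_dropUntil_subset p hmp ha1
    have haq : a ∈ q.support := Walk.support_dropUntil_subset q hmq ha2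
    have hle : G.dist x a ≤ G.dist x m := by
      apply hmax; simp only [Finset.mem_inter, List.mem_toFinset]; exact ⟨hap, haq⟩
    -- a on path m → y
    have b1 := mem_support_between hT (hp.dropUntil hmp) ha1
    have b2 := mem_support_between hT hp hap
    have : G.dist m a = 0 := by omega
    exact (eq_of_dist_eq_zero hT this).symm
  have hpath := isPath_append hr1 hr2 hdisj
  have hlen := path_length_eq_dist hT hpath
  rw [Walk.length_append, Walk.length_reverse,
    path_length_eq_dist hT (hp.dropUntil hmp), path_length_eq_dist hT (hq.dropUntil hmq)] at hlen
  have c1 : G.dist y m = G.dist m y := dist_comm ..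
  omega

lemma dist_formula (hT : G.IsTree) {x y v : V}
    (hb : G.dist x v + G.dist v y = G.dist x y) (z : V) :
    (2 * G.dist v z : ℤ) =
      |2 * (G.dist x v : ℤ) - ((G.dist x y : ℤ) + G.dist x z - G.dist y z)|
        + 2 * G.dist x z - ((G.dist x y : ℤ) + G.dist x z - G.dist y z) := by
  obtain ⟨m, h1, h2, h3⟩ := median hT x y z
  have hD : (G.dist x y : ℤ) + G.dist x z - G.dist y z = 2 * G.dist x m := by
    have c1 : G.dist y m = G.dist m y := dist_comm ..
    push_cast
    omega
  rw [hD]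
  rcases collinear hT hb h1 with hc | hc
  · -- dist x m ≤ dist x v
    -- d v z = d v m + d m z
    have hdvm : G.dist m v = G.dist v m := dist_comm ..
    have ht1 : G.dist v z ≤ G.dist v m + G.dist m z := hT.isConnected.dist_triangle
    have ht2 : G.dist y z ≤ G.dist y v + G.dist v z := hT.isConnected.dist_triangle
    have hyv : G.dist y v = G.dist v y := dist_comm ..
    have hym : G.dist y m = G.dist m y := dist_comm ..
    have habs : |2 * (G.dist x v : ℤ) - 2 * G.dist x m| = 2 * G.dist x v - 2 * G.dist x m := by
      rw [abs_of_nonneg]; omega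
    rw [habs]; push_cast; omega
  · have hdvm : G.dist m v = G.dist v m := dist_comm ..
    have ht1 : G.dist v z ≤ G.dist v m + G.dist m z := hT.isConnected.dist_triangle
    have ht2 : G.dist x z ≤ G.dist x v + G.dist v z := hT.isConnected.dist_triangle
    have habs : |2 * (G.dist x v : ℤ) - 2 * G.dist x m| = 2 * G.dist x m - 2 * G.dist x v := by
      rw [abs_of_nonpos (by omega)]; ring
    rw [habs]; push_cast; omega


end Tree

section Phylo
variable {V : Type} {G : SimpleGraph V}

lemma dist_getVert_left (hT : G.IsTree) {x y : V} (p : G.Walk x y) (n : ℕ) :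
    G.dist x (p.getVert n) ≤ n := by
  induction p generalizing n with
  | nil => simp [Walk.getVert, SimpleGraph.dist_self]
  | cons h q ih =>
    cases n with
    | zero => simp [Walk.getVert]
    | succ n =>
      rw [Walk.getVert_cons_succ]
      calc G.dist _ _ ≤ G.dist _ _ + G.dist _ (q.getVert n) := hT.isConnected.dist_triangle
        _ ≤ 1 + n := by
            gcongr
            · exact le_of_eq (dist_eq_one_iff_adj.mpr h)
            · exact ih n
        _ = n + 1 := by omega

lemma dist_getVert_right {x y : V} (p : G.Walk x y) (n : ℕ) :
    G.dist (p.getVert n) y ≤ p.length - n := by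
  induction p generalizing n with
  | nil => simp [Walk.getVert]
  | cons h q ih =>
    cases n with
    | zero =>
      simpa [Walk.getVert] using dist_le (Walk.cons h q)
    | succ n =>
      rw [Walk.getVert_cons_succ]
      simpa using ih n

lemma dist_lt_card (hT : G.IsTree) [Fintype V] (u v : V) : G.dist u v < Fintype.card V := by
  obtain ⟨p, hp, hl⟩ := hT.isConnected.exists_path_of_dist u v
  rw [← hl]; exact hp.length_lt

variable {N : ℕ} {leaf : Fin N ↪ V}

lemma exists_next (hP : IsPhylo G leaf) {u v : V} (hdeg : (G.neighborSet v).ncard = 3) :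
    ∃ z, G.Adj v z ∧ G.dist u z = G.dist u v + 1 := by
  classical
  haveI := hP.finite
  have hT := hP.isTree
  by_cases huv : u = v
  · subst huv
    obtain ⟨z, hz⟩ := Set.nonempty_of_ncard_ne_zero
      (by omega : (G.neighborSet u).ncard ≠ 0)
    exact ⟨z, hz, by simp [dist_eq_one_iff_adj.mpr (hz : G.Adj u z)]⟩
  · obtain ⟨p, hp, hpl⟩ := hT.isConnected.exists_path_of_dist u v
    have hone : ∀ z₁ z₂, G.Adj v z₁ → G.Adj v z₂ → z₁ ∈ p.support → z₂ ∈ p.support →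
        z₁ = z₂ := by
      intro z₁ z₂ ha₁ ha₂ hm₁ hm₂
      have hb₁ := mem_support_between hT hp hm₁
      have hb₂ := mem_support_between hT hp hm₂
      have hd₁ : G.dist z₁ v = 1 := dist_eq_one_iff_adj.mpr ha₁.symm
      have hd₂ : G.dist z₂ v = 1 := dist_eq_one_iff_adj.mpr ha₂.symm
      rcases collinear hT hb₁ hb₂ with h | h
      · exact (eq_of_dist_eq_zero hT (by omega : G.dist z₂ z₁ = 0)).symm
      · exact eq_of_dist_eq_zero hT (by omega : G.dist z₁ z₂ = 0)
    obtain ⟨z, hz, hzs⟩ : ∃ z, G.Adj v z ∧ z ∉ p.support := by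
      by_contra hcon
      push_neg at hcon
      have hss : (G.neighborSet v).Subsingleton := fun a ha b hb =>
        hone a b ha hb (hcon a ha) (hcon b hb)
      have := (Set.ncard_le_one (Set.toFinite _)).mpr (fun a ha b hb => hss ha hb)
      omega
    refine ⟨z, hz, ?_⟩
    have hvz : v ≠ z := G.ne_of_adj hz
    have hpath : (p.append (Walk.cons hz Walk.nil)).IsPath := by
      apply isPath_append hp
      · simp [Walk.isPath_def, hvz]
      · intro a ha ha'
        simp only [Walk.support_cons, Walk.support_nil, List.mem_cons,
          List.not_mem_nil, or_false, List.mem_singleton] at ha'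
        rcases ha' with rfl | rfl
        · rfl
        · exact absurd ha hzs
    have hlen := path_length_eq_dist hT hpath
    rw [Walk.length_append] at hlen
    simp only [Walk.length_cons, Walk.length_nil, zero_add] at hlen
    omega

lemma extend_to_leaf (hP : IsPhylo G leaf) (u v : V) :
    ∃ i, G.dist u (leaf i) = G.dist u v + G.dist v (leaf i) := by
  classical
  haveI := hP.finite
  haveI := Fintype.ofFinite V
  have hT := hP.isTree
  suffices H : ∀ k v, Fintype.card V ≤ G.dist u v + k →
      ∃ i, G.dist u (leaf i) = G.dist u v + G.dist v (leaf i) by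
    exact H (Fintype.card V) v (by omega)
  intro k
  induction k with
  | zero =>
    intro v h
    have := dist_lt_card hT u v
    omega
  | succ k ih =>
    intro v hle
    rcases hP.deg v with hdeg | hdeg
    · obtain ⟨i, hi⟩ := (hP.leafIff v).mp hdeg
      refine ⟨i, ?_⟩
      rw [hi]
      simp
    · obtain ⟨z, hadj, hdz⟩ := exists_next (u := u) hP hdeg
      obtain ⟨i, hi⟩ := ih z (by omega)
      have t1 : G.dist u (leaf i) ≤ G.dist u v + G.dist v (leaf i) :=
        hT.isConnected.dist_triangle
      have t2 : G.dist v (leaf i) ≤ G.dist v z + G.dist z (leaf i) :=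
        hT.isConnected.dist_triangle
      have hvz1 : G.dist v z = 1 := dist_eq_one_iff_adj.mpr hadj
      exact ⟨i, by omega⟩

lemma leaf_vec_determines (hP : IsPhylo G leaf) {u v : V}
    (h : ∀ i, G.dist u (leaf i) = G.dist v (leaf i)) : u = v := by
  obtain ⟨i, hi⟩ := extend_to_leaf hP u v
  have := h i
  exact eq_of_dist_eq_zero hP.isTree (by omega)

variable {V₁ V₂ : Type} {G₁ : SimpleGraph V₁} {G₂ : SimpleGraph V₂}
  {leaf₁ : Fin N ↪ V₁} {leaf₂ : Fin N ↪ V₂}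

lemma exists_partner (hP₁ : IsPhylo G₁ leaf₁) (hP₂ : IsPhylo G₂ leaf₂)
    (hEq : ∀ i j, G₁.dist (leaf₁ i) (leaf₁ j) = G₂.dist (leaf₂ i) (leaf₂ j))
    (i0 : Fin N) (v : V₁) :
    ∃ w : V₂, ∀ k, G₂.dist w (leaf₂ k) = G₁.dist v (leaf₁ k) := by
  obtain ⟨j, hj⟩ := extend_to_leaf hP₁ (leaf₁ i0) v
  obtain ⟨p, hp, hpl⟩ := hP₂.isTree.isConnected.exists_path_of_dist (leaf₂ i0) (leaf₂ j)
  refine ⟨p.getVert (G₁.dist (leaf₁ i0) v), fun k => ?_⟩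
  set a := G₁.dist (leaf₁ i0) v with ha
  set w := p.getVert a with hwdef
  have hl1 : G₂.dist (leaf₂ i0) w ≤ a := dist_getVert_left hP₂.isTree p a
  have hl2 : G₂.dist w (leaf₂ j) ≤ p.length - a := dist_getVert_right p a
  have hd2 : G₂.dist (leaf₂ i0) (leaf₂ j) ≤
      G₂.dist (leaf₂ i0) w + G₂.dist w (leaf₂ j) := hP₂.isTree.isConnected.dist_triangle
  have heq0 : G₂.dist (leaf₂ i0) (leaf₂ j) = G₁.dist (leaf₁ i0) (leaf₁ j) := (hEq i0 j).symm
  have hw1 : G₂.dist (leaf₂ i0) w = a := by omega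
  have hbw : G₂.dist (leaf₂ i0) w + G₂.dist w (leaf₂ j) =
      G₂.dist (leaf₂ i0) (leaf₂ j) := by omega
  have hj' : G₁.dist (leaf₁ i0) v + G₁.dist v (leaf₁ j) = G₁.dist (leaf₁ i0) (leaf₁ j) :=
    hj.symm
  have F₁ := dist_formula hP₁.isTree hj' (leaf₁ k)
  have F₂ := dist_formula hP₂.isTree hbw (leaf₂ k)
  rw [hw1, ← hEq i0 j, ← hEq i0 k, ← hEq j k] at F₂
  rw [← ha] at F₁
  have : (G₂.dist w (leaf₂ k) : ℤ) = (G₁.dist v (leaf₁ k) : ℤ) := by linarith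
  exact_mod_cast this

lemma dist_le_of_vec (hP₁ : IsPhylo G₁ leaf₁) (hP₂ : IsPhylo G₂ leaf₂) {f : V₁ → V₂}
    (hf : ∀ v k, G₂.dist (f v) (leaf₂ k) = G₁.dist v (leaf₁ k)) (u v : V₁) :
    G₁.dist u v ≤ G₂.dist (f u) (f v) := by
  obtain ⟨i, hi⟩ := extend_to_leaf hP₁ u v
  have t : G₂.dist (f u) (leaf₂ i) ≤ G₂.dist (f u) (f v) + G₂.dist (f v) (leaf₂ i) :=
    hP₂.isTree.isConnected.dist_triangle
  rw [hf u i, hf v i] at t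
  omega


end Phylo

section Main
variable {N : ℕ} {V₁ V₂ : Type} {G₁ : SimpleGraph V₁} {G₂ : SimpleGraph V₂}
  {leaf₁ : Fin N ↪ V₁} {leaf₂ : Fin N ↪ V₂}

lemma labeledIso_of_distEq (hP₁ : IsPhylo G₁ leaf₁) (hP₂ : IsPhylo G₂ leaf₂) (i0 : Fin N)
    (hEq : ∀ i j, G₁.dist (leaf₁ i) (leaf₁ j) = G₂.dist (leaf₂ i) (leaf₂ j)) :
    LabeledIso G₁ leaf₁ G₂ leaf₂ := by
  classical
  choose φ hφ using exists_partner hP₁ hP₂ hEq i0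
  have hEq' : ∀ i j, G₂.dist (leaf₂ i) (leaf₂ j) = G₁.dist (leaf₁ i) (leaf₁ j) :=
    fun i j => (hEq i j).symm
  choose ψ hψ using exists_partner hP₂ hP₁ hEq' i0
  have hψφ : ∀ v, ψ (φ v) = v := fun v =>
    leaf_vec_determines hP₁ (fun k => (hψ (φ v) k).trans (hφ v k))
  have hφψ : ∀ w, φ (ψ w) = w := fun w =>
    leaf_vec_determines hP₂ (fun k => (hφ (ψ w) k).trans (hψ w k))
  have hdist : ∀ u v : V₁, G₂.dist (φ u) (φ v) = G₁.dist u v := by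
    intro u v
    refine le_antisymm ?_ (dist_le_of_vec hP₁ hP₂ hφ u v)
    have h2 := dist_le_of_vec hP₂ hP₁ hψ (φ u) (φ v)
    rwa [hψφ, hψφ] at h2
  refine ⟨⟨φ, ψ, hψφ, hφψ⟩, fun a b => ?_, fun i => ?_⟩
  · show G₁.Adj a b ↔ G₂.Adj (φ a) (φ b)
    rw [← dist_eq_one_iff_adj, ← dist_eq_one_iff_adj, hdist]
  · show φ (leaf₁ i) = leaf₂ i
    refine leaf_vec_determines hP₂ (fun k => ?_)
    rw [hφ (leaf₁ i) k, hEq i k]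

lemma dist_eq_of_iso (hc : G₁.Connected) {φ : V₁ ≃ V₂}
    (hadj : ∀ a b : V₁, G₁.Adj a b ↔ G₂.Adj (φ a) (φ b)) (u v : V₁) :
    G₂.dist (φ u) (φ v) = G₁.dist u v := by
  let hom₁ : G₁ →g G₂ := ⟨φ, fun h => (hadj _ _).mp h⟩
  let hom₂ : G₂ →g G₁ := ⟨(φ.symm : V₂ → V₁), fun {a b} h => by
    have := (hadj (φ.symm a) (φ.symm b)).mpr
    simp only [Equiv.apply_symm_apply] at this
    exact this h⟩
  apply le_antisymm
  · obtain ⟨p, hpl⟩ := (hc u v).exists_walk_length_eq_dist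
    calc G₂.dist (φ u) (φ v) ≤ (p.map hom₁).length := dist_le _
      _ = G₁.dist u v := by rw [Walk.length_map, hpl]
  · have hr : G₂.Reachable (φ u) (φ v) := by
      obtain ⟨p, _⟩ := (hc u v).exists_walk_length_eq_dist
      exact (p.map hom₁).reachable
    obtain ⟨q, hql⟩ := hr.exists_walk_length_eq_dist
    have h3 : G₁.dist (φ.symm (φ u)) (φ.symm (φ v)) ≤ (q.map hom₂).length := dist_le _
    rw [Walk.length_map, hql] at h3
    simpa using h3

end Main

end PDAux

/-- The path-difference distance is a metric on unrooted bifurcating tree topologies with a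
fixed leaf set of size `N ≥ 3`: it vanishes exactly on pairs of equal
(leaf-label-isomorphic) trees, is symmetric, and satisfies the triangle inequality.  In
particular the vector of pairwise leaf path lengths determines the tree. -/
theorem pd_distance_is_metric (N : ℕ) (hN : 3 ≤ N)
    {V₁ V₂ V₃ : Type}
    (G₁ : SimpleGraph V₁) (leaf₁ : Fin N ↪ V₁) (h₁ : IsPhylo G₁ leaf₁)
    (G₂ : SimpleGraph V₂) (leaf₂ : Fin N ↪ V₂) (h₂ : IsPhylo G₂ leaf₂)
    (G₃ : SimpleGraph V₃) (leaf₃ : Fin N ↪ V₃) (h₃ : IsPhylo G₃ leaf₃) :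
    (pdDist G₁ leaf₁ G₂ leaf₂ = 0 ↔ LabeledIso G₁ leaf₁ G₂ leaf₂) ∧
    pdDist G₁ leaf₁ G₂ leaf₂ = pdDist G₂ leaf₂ G₁ leaf₁ ∧
    pdDist G₁ leaf₁ G₃ leaf₃ ≤ pdDist G₁ leaf₁ G₂ leaf₂ + pdDist G₂ leaf₂ G₃ leaf₃ := by
  classical
  have i0 : Fin N := ⟨0, by omega⟩
  refine ⟨⟨?_, ?_⟩, ?_, ?_⟩
  · intro h0
    unfold pdDist at h0
    have hterm := Finset.sum_eq_zero_iff.mp h0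
    have hlt : ∀ i j : Fin N, i < j →
        G₁.dist (leaf₁ i) (leaf₁ j) = G₂.dist (leaf₂ i) (leaf₂ j) := by
      intro i j hij
      have h := hterm (i, j) (by simp [hij])
      have h2 : (G₁.dist (leaf₁ i) (leaf₁ j) : ℤ) = (G₂.dist (leaf₂ i) (leaf₂ j) : ℤ) :=
        sub_eq_zero.mp (Int.natAbs_eq_zero.mp h)
      exact_mod_cast h2
    have hEq : ∀ i j, G₁.dist (leaf₁ i) (leaf₁ j) = G₂.dist (leaf₂ i) (leaf₂ j) := by
      intro i j
      rcases lt_trichotomy i j with h | h | h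
      · exact hlt i j h
      · subst h; simp [SimpleGraph.dist_self]
      · calc G₁.dist (leaf₁ i) (leaf₁ j) = G₁.dist (leaf₁ j) (leaf₁ i) := dist_comm ..
          _ = G₂.dist (leaf₂ j) (leaf₂ i) := hlt j i h
          _ = G₂.dist (leaf₂ i) (leaf₂ j) := dist_comm ..
    exact PDAux.labeledIso_of_distEq h₁ h₂ i0 hEq
  · rintro ⟨φ, hadj, hleaf⟩
    apply Finset.sum_eq_zero
    intro p _
    have h := PDAux.dist_eq_of_iso h₁.isTree.isConnected hadj (leaf₁ p.1) (leaf₁ p.2)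
    rw [hleaf, hleaf] at h
    rw [h]
    simp
  · unfold pdDist
    apply Finset.sum_congr rfl
    intro p _
    rw [← Int.natAbs_neg, neg_sub]
  · unfold pdDist
    rw [← Finset.sum_add_distrib]
    apply Finset.sum_le_sum
    intro p _
    have h : (G₁.dist (leaf₁ p.1) (leaf₁ p.2) : ℤ) - (G₃.dist (leaf₃ p.1) (leaf₃ p.2) : ℤ) =
        ((G₁.dist (leaf₁ p.1) (leaf₁ p.2) : ℤ) - (G₂.dist (leaf₂ p.1) (leaf₂ p.2) : ℤ)) +
        ((G₂.dist (leaf₂ p.1) (leaf₂ p.2) : ℤ) - (G₃.dist (leaf₃ p.1) (leaf₃ p.2) : ℤ)) := by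
      ring
    rw [h]
    exact Int.natAbs_add_le _ _
end
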